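/- arXiv:math/0503387 — 4 statements merged into one kernel-verified Lean document; each statement's English description precedes it below -/
import Mathlib

section
/- For γ, η smooth maps with η : ℝᵈ → ℝⁿ, γ : ℝⁿ → ℝᵐ, and η₁ : ℝᵈ → ℝⁿ, the difference quotient (γ∘(η + tη₁) − γ∘η)/t converges, as t → 0, to the map x ↦ dγ(η(x); η₁(x)) in the compact-open C^∞ topology on C^∞(ℝᵈ, ℝᵐ). -/
open Filter Topology Set

/-- Smooth maps `E → F` (arbitrary order of smoothness `C^∞`). -/
@[reducible] def SmoothFn (E F : Type*) [NormedAddCommGroup E] [NormedSpace ℝ E]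
    [NormedAddCommGroup F] [NormedSpace ℝ F] : Type _ :=
  {f : E → F // ContDiff ℝ (⊤ : ℕ∞) f}

variable {E F : Type*} [NormedAddCommGroup E] [NormedSpace ℝ E]
  [NormedAddCommGroup F] [NormedSpace ℝ F]

/-- The compact-open `C^∞` topology: uniform convergence of all derivatives on compacts. -/
noncomputable instance SmoothFn.topology : TopologicalSpace (SmoothFn E F) :=
  ⨅ k : ℕ, TopologicalSpace.induced
    (fun f : SmoothFn E F =>
      ContinuousMap.mk (iteratedFDeriv ℝ k f.1)
        (f.2.continuous_iteratedFDeriv (mod_cast le_top)))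
    ContinuousMap.compactOpen

instance : Add (SmoothFn E F) := ⟨fun f g => ⟨f.1 + g.1, f.2.add g.2⟩⟩
instance : Neg (SmoothFn E F) := ⟨fun f => ⟨-f.1, f.2.neg⟩⟩
instance : Zero (SmoothFn E F) := ⟨⟨0, contDiff_const⟩⟩
instance : Sub (SmoothFn E F) := ⟨fun f g => ⟨f.1 - g.1, f.2.sub g.2⟩⟩
instance : SMul ℝ (SmoothFn E F) := ⟨fun c f => ⟨c • f.1, f.2.const_smul c⟩⟩
instance : SMul ℕ (SmoothFn E F) := ⟨fun n f => ⟨n • f.1, f.2.const_smul n⟩⟩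
instance : SMul ℤ (SmoothFn E F) := ⟨fun n f => ⟨n • f.1, f.2.const_smul n⟩⟩

instance : AddCommGroup (SmoothFn E F) :=
  Function.Injective.addCommGroup (fun f : SmoothFn E F => f.1) Subtype.val_injective
    rfl (fun _ _ => rfl) (fun _ => rfl) (fun _ _ => rfl) (fun _ _ => rfl) (fun _ _ => rfl)

instance : Module ℝ (SmoothFn E F) :=
  Function.Injective.module ℝ
    { toFun := fun f : SmoothFn E F => f.1, map_zero' := rfl, map_add' := fun _ _ => rfl }
    Subtype.val_injective (fun _ _ => rfl)

section Test
variable (F : Type) [NormedAddCommGroup F] [NormedSpace ℝ F]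

/-- Compactly supported smooth functions on the line. -/
@[reducible] def TestFn : Type _ :=
  {f : ℝ → F // ContDiff ℝ (⊤ : ℕ∞) f ∧ HasCompactSupport f}

/-- Smooth functions supported in `[-N, N]`. -/
@[reducible] def StepFn (N : ℕ) : Type _ :=
  {f : ℝ → F // ContDiff ℝ (⊤ : ℕ∞) f ∧ tsupport f ⊆ Set.Icc (-(N:ℝ)) N}

variable {F}

def StepFn.toSmoothFn {N : ℕ} (f : StepFn F N) : SmoothFn ℝ F := ⟨f.1, f.2.1⟩

/-- Step spaces carry the (Fréchet) topology of uniform convergence of all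
derivatives (on compact sets, equivalently globally). -/
noncomputable instance StepFn.topology (N : ℕ) : TopologicalSpace (StepFn F N) :=
  TopologicalSpace.induced StepFn.toSmoothFn inferInstance

theorem StepFn.hasCompactSupport {N : ℕ} (f : StepFn F N) : HasCompactSupport f.1 :=
  IsCompact.of_isClosed_subset isCompact_Icc (isClosed_tsupport _) f.2.2

def StepFn.toTestFn {N : ℕ} (f : StepFn F N) : TestFn F :=
  ⟨f.1, f.2.1, f.hasCompactSupport⟩

instance : Add (TestFn F) := ⟨fun f g => ⟨f.1 + g.1, (f.2.1.add g.2.1), f.2.2.add g.2.2⟩⟩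
instance : Neg (TestFn F) :=
  ⟨fun f => ⟨-f.1, f.2.1.neg, f.2.2.mono (fun x hx => by
    simp only [Function.mem_support, Pi.neg_apply, neg_ne_zero] at hx ⊢; exact hx)⟩⟩
instance : Zero (TestFn F) := ⟨⟨0, contDiff_const, HasCompactSupport.zero⟩⟩
instance : Sub (TestFn F) :=
  ⟨fun f g => ⟨f.1 - g.1, f.2.1.sub g.2.1, by
    have : HasCompactSupport (-g.1) := g.2.2.mono (fun x hx => by
      simp only [Function.mem_support, Pi.neg_apply, neg_ne_zero] at hx ⊢; exact hx)
    simpa [sub_eq_add_neg] using f.2.2.add this⟩⟩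
instance : SMul ℝ (TestFn F) :=
  ⟨fun c f => ⟨c • f.1, f.2.1.const_smul c, f.2.2.smul_left (f := fun _ => c)⟩⟩

instance : SMul ℕ (TestFn F) :=
  ⟨fun n f => ⟨n • f.1, f.2.1.const_smul n, f.2.2.mono (fun x hx => by
    simp only [Function.mem_support, Pi.smul_apply] at hx ⊢
    intro h; exact hx (by rw [h, smul_zero]))⟩⟩
instance : SMul ℤ (TestFn F) :=
  ⟨fun n f => ⟨n • f.1, f.2.1.const_smul n, f.2.2.mono (fun x hx => by
    simp only [Function.mem_support, Pi.smul_apply] at hx ⊢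
    intro h; exact hx (by rw [h, smul_zero]))⟩⟩

instance : AddCommGroup (TestFn F) :=
  Function.Injective.addCommGroup (fun f : TestFn F => f.1) Subtype.val_injective
    rfl (fun _ _ => rfl) (fun _ => rfl) (fun _ _ => rfl) (fun _ _ => rfl) (fun _ _ => rfl)

instance : Module ℝ (TestFn F) :=
  Function.Injective.module ℝ
    { toFun := fun f : TestFn F => f.1, map_zero' := rfl, map_add' := fun _ _ => rfl }
    Subtype.val_injective (fun _ _ => rfl)

/-- The locally convex direct limit topology on the space of test functions:
the finest locally convex vector topology making all inclusions of the
steps `C^∞_{[-N,N]}` continuous. -/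
noncomputable instance TestFn.topology : TopologicalSpace (TestFn F) :=
  sInf {t : TopologicalSpace (TestFn F) |
    @IsTopologicalAddGroup (TestFn F) t _ ∧ @ContinuousSMul ℝ (TestFn F) _ _ t ∧
    @LocallyConvexSpace ℝ (TestFn F) _ _ _ _ t ∧
    ∀ N : ℕ, Continuous[StepFn.topology N, t] (StepFn.toTestFn (F := F) (N := N))}

instance {N : ℕ} : Add (StepFn F N) :=
  ⟨fun f g => ⟨f.1 + g.1, f.2.1.add g.2.1,
    (closure_mono (Function.support_add _ _)).trans
      (by rw [closure_union]; exact union_subset f.2.2 g.2.2)⟩⟩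
instance {N : ℕ} : Neg (StepFn F N) :=
  ⟨fun f => ⟨-f.1, f.2.1.neg, by
    refine (closure_mono ?_).trans f.2.2
    intro x hx; simp only [Function.mem_support, Pi.neg_apply, neg_ne_zero] at hx ⊢; exact hx⟩⟩
instance {N : ℕ} : Zero (StepFn F N) :=
  ⟨⟨0, contDiff_const, by
    have : Function.support (0 : ℝ → F) = ∅ := Function.support_zero
    rw [tsupport, this, closure_empty]; exact empty_subset _⟩⟩
instance {N : ℕ} : Sub (StepFn F N) :=
  ⟨fun f g => ⟨f.1 - g.1, f.2.1.sub g.2.1, by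
    have h : Function.support (f.1 - g.1) ⊆ Function.support f.1 ∪ Function.support g.1 :=
      Function.support_sub _ _
    exact (closure_mono h).trans
      (by rw [closure_union]; exact union_subset f.2.2 g.2.2)⟩⟩

private theorem StepFn.smul_support {N : ℕ} (f : StepFn F N) {M : Type*} [Monoid M]
    [DistribMulAction M F] (c : M) :
    tsupport (c • f.1) ⊆ Set.Icc (-(N:ℝ)) N := by
  refine (closure_mono ?_).trans f.2.2
  intro x hx
  simp only [Function.mem_support, Pi.smul_apply] at hx ⊢
  intro h; exact hx (by rw [h, smul_zero])

instance {N : ℕ} : SMul ℝ (StepFn F N) :=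
  ⟨fun c f => ⟨c • f.1, f.2.1.const_smul c, f.smul_support c⟩⟩
instance {N : ℕ} : SMul ℕ (StepFn F N) :=
  ⟨fun n f => ⟨n • f.1, f.2.1.const_smul n, f.smul_support n⟩⟩
instance {N : ℕ} : SMul ℤ (StepFn F N) :=
  ⟨fun n f => ⟨n • f.1, f.2.1.const_smul n, f.smul_support n⟩⟩

instance {N : ℕ} : AddCommGroup (StepFn F N) :=
  Function.Injective.addCommGroup (fun f : StepFn F N => f.1) Subtype.val_injective
    rfl (fun _ _ => rfl) (fun _ => rfl) (fun _ _ => rfl) (fun _ _ => rfl) (fun _ _ => rfl)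

instance {N : ℕ} : Module ℝ (StepFn F N) :=
  Function.Injective.module ℝ
    { toFun := fun f : StepFn F N => f.1, map_zero' := rfl, map_add' := fun _ _ => rfl }
    Subtype.val_injective (fun _ _ => rfl)

end Test

universe u

/-- Michal–Bastiani `C^k` maps between (whole) topological vector spaces:
`f` is `C^{k+1}` if it is continuous, all two-sided directional derivatives
exist, and the resulting map `df : E × E → F` is `C^k`. -/
def IsCMB : (k : ℕ) → (E F : Type u) → [AddCommGroup E] → [Module ℝ E] →
    [TopologicalSpace E] → [AddCommGroup F] → [Module ℝ F] → [TopologicalSpace F] →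
    (E → F) → Prop
  | 0, _, _, _, _, _, _, _, _, f => Continuous f
  | (k+1), E, F, _, _, _, _, _, _, f => Continuous f ∧ ∃ df : E × E → F,
      (∀ p : E × E, Filter.Tendsto (fun t : ℝ => t⁻¹ • (f (p.1 + t • p.2) - f p.1))
        (nhdsWithin (0:ℝ) {(0:ℝ)}ᶜ) (nhds (df p)))
      ∧ IsCMB k (E × E) F df

/-- Michal–Bastiani smooth (`C^∞`) maps between topological vector spaces. -/
def IsSmoothMB (E F : Type u) [AddCommGroup E] [Module ℝ E] [TopologicalSpace E]
    [AddCommGroup F] [Module ℝ F] [TopologicalSpace F] (f : E → F) : Prop :=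
  ∀ k : ℕ, IsCMB k E F f

/-- The map `γ ↦ γ ∘ γ - γ(0)` on test functions. -/
noncomputable def selfComp (γ : TestFn ℝ) : TestFn ℝ :=
  ⟨fun x => γ.1 (γ.1 x) - γ.1 0,
   (γ.2.1.comp γ.2.1).sub contDiff_const,
   γ.2.2.mono (fun x hx => by
     simp only [Function.mem_support] at hx ⊢
     intro h0; exact hx (by rw [h0]; exact sub_self _))⟩

/-- The basic zero-neighbourhoods `V(k,e)` of the test function space. -/
def Vset (k : ℤ → ℕ) (e : ℤ → ℝ) : Set (TestFn ℝ) :=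
  {γ | ∀ n : ℤ, ∀ j ≤ k n, ∀ x ∈ Set.Icc ((n:ℝ) - 1/2) ((n:ℝ) + 1/2),
    |iteratedDeriv j γ.1 x| < e n}

section MyAux
variable {E : Type} [NormedAddCommGroup E] [NormedSpace ℝ E]

theorem myFderivSlice {X : Type} [NormedAddCommGroup X] [NormedSpace ℝ X]
    {G : ℝ × E → X} (hG : ContDiff ℝ (⊤ : ℕ∞) G) (t : ℝ) (y : E) :
    fderiv ℝ (fun z => G (t, z)) y
      = (fderiv ℝ G (t, y)).comp (ContinuousLinearMap.inr ℝ ℝ E) :=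
  (((hG.differentiable (by simp)) (t, y)).hasFDerivAt.comp y
    (hasFDerivAt_prodMk_right t y)).fderiv

theorem myDerQ (k : ℕ) : ∀ {X : Type} [NormedAddCommGroup X] [NormedSpace ℝ X]
    (G : ℝ × E → X), ContDiff ℝ (⊤ : ℕ∞) G → ∀ (t₀ : ℝ) (x : E),
    HasDerivAt (fun t => iteratedFDeriv ℝ k (fun y => G (t, y)) x)
      (iteratedFDeriv ℝ k (fun y => fderiv ℝ G (t₀, y) (1, 0)) x) t₀ := by
  induction k with
  | zero =>
    intro X _ _ G hG t₀ x
    have hx : HasDerivAt (fun t => G (t, x)) (fderiv ℝ G (t₀, x) (1, 0)) t₀ := by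
      have h := (((hG.differentiable (by simp)) (t₀, x)).hasFDerivAt.comp t₀
        (hasFDerivAt_prodMk_left t₀ x)).hasDerivAt
      simpa [Function.comp_def] using h
    have h2 := (((continuousMultilinearCurryFin0 ℝ E X).symm.toContinuousLinearEquiv :
        X ≃L[ℝ] _).toContinuousLinearMap.hasFDerivAt).comp_hasDerivAt t₀ hx
    simp only [iteratedFDeriv_zero_eq_comp]
    exact h2
  | succ k IH =>
    intro X _ _ G hG t₀ x
    set G₁ : ℝ × E → (E →L[ℝ] X) :=
      fun p => (fderiv ℝ G p).comp (ContinuousLinearMap.inr ℝ ℝ E) with hG₁def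
    have hsm : ContDiff ℝ (⊤ : ℕ∞) G₁ :=
      (hG.fderiv_right (by exact_mod_cast le_top)).clm_comp contDiff_const
    -- symmetry of the second derivative
    have key : ∀ y : E, fderiv ℝ G₁ (t₀, y) (1, 0)
        = fderiv ℝ (fun z => fderiv ℝ G (t₀, z) (1, 0)) y := by
      intro y
      have hdiff : ∀ p : ℝ × E, HasFDerivAt G (fderiv ℝ G p) p := fun p =>
        ((hG.differentiable (by simp)) p).hasFDerivAt
      have hS : HasFDerivAt (fderiv ℝ G) (fderiv ℝ (fderiv ℝ G) (t₀, y)) (t₀, y) :=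
        (((hG.fderiv_right (m := (⊤:ℕ∞)) (by exact_mod_cast le_top)).differentiable
          (by simp)) (t₀, y)).hasFDerivAt
      set S := fderiv ℝ (fderiv ℝ G) (t₀, y) with hSdef
      have hsymm : ∀ v w : ℝ × E, S v w = S w v := second_derivative_symmetric hdiff hS
      -- LHS
      have cmp : ((ℝ × E) →L[ℝ] X) →L[ℝ] (E →L[ℝ] X) :=
        (ContinuousLinearMap.compL ℝ E (ℝ × E) X).flip (ContinuousLinearMap.inr ℝ ℝ E)
      have hL : fderiv ℝ G₁ (t₀, y)
          = (((ContinuousLinearMap.compL ℝ E (ℝ × E) X).flip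
              (ContinuousLinearMap.inr ℝ ℝ E)).comp S) := by
        refine HasFDerivAt.fderiv ?_
        exact (((ContinuousLinearMap.compL ℝ E (ℝ × E) X).flip
          (ContinuousLinearMap.inr ℝ ℝ E)).hasFDerivAt).comp (t₀, y) hS
      have hR : fderiv ℝ (fun z => fderiv ℝ G (t₀, z) (1, 0)) y
          = ((ContinuousLinearMap.apply ℝ X ((1:ℝ), (0:E))).comp
              (S.comp (ContinuousLinearMap.inr ℝ ℝ E))) := by
        refine HasFDerivAt.fderiv ?_
        exact ((ContinuousLinearMap.apply ℝ X ((1:ℝ), (0:E))).hasFDerivAt).comp y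
          (hS.comp y (hasFDerivAt_prodMk_right t₀ y))
      rw [hL, hR]
      ext v
      simpa using hsymm (1, 0) (0, v)
    have h1 : ∀ t : ℝ, iteratedFDeriv ℝ (k+1) (fun y => G (t, y)) x
        = (continuousMultilinearCurryRightEquiv' ℝ k E X).symm
            (iteratedFDeriv ℝ k (fun y => G₁ (t, y)) x) := by
      intro t
      rw [iteratedFDeriv_succ_eq_comp_right, Function.comp_apply]
      exact congrArg _ (congrArg (fun f => iteratedFDeriv ℝ k f x)
        (funext fun y => myFderivSlice hG t y))
    have h2 : iteratedFDeriv ℝ (k+1) (fun y => fderiv ℝ G (t₀, y) (1, 0)) x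
        = (continuousMultilinearCurryRightEquiv' ℝ k E X).symm
            (iteratedFDeriv ℝ k (fun y => fderiv ℝ G₁ (t₀, y) (1, 0)) x) := by
      rw [iteratedFDeriv_succ_eq_comp_right, Function.comp_apply]
      refine congrArg _ (congrArg (fun f => iteratedFDeriv ℝ k f x) (funext fun y => ?_))
      exact (key y).symm
    have hc := ((((continuousMultilinearCurryRightEquiv' ℝ k E X).symm.toContinuousLinearEquiv :
        _ ≃L[ℝ] _).toContinuousLinearMap.hasFDerivAt).comp_hasDerivAt t₀
        (IH G₁ hsm t₀ x))
    simp only [h1, h2]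
    exact hc

theorem myContP (k : ℕ) : ∀ {X : Type} [NormedAddCommGroup X] [NormedSpace ℝ X]
    (G : ℝ × E → X), ContDiff ℝ (⊤ : ℕ∞) G →
    Continuous (fun p : ℝ × E => iteratedFDeriv ℝ k (fun y => G (p.1, y)) p.2) := by
  induction k with
  | zero =>
    intro X _ _ G hG
    simp only [iteratedFDeriv_zero_eq_comp, Function.comp_apply]
    exact (LinearIsometryEquiv.continuous _).comp (hG.continuous.comp
      (continuous_fst.prodMk continuous_snd))
  | succ k IH =>
    intro X _ _ G hG
    have hsm : ContDiff ℝ (⊤ : ℕ∞) (fun p : ℝ × E =>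
        (fderiv ℝ G p).comp (ContinuousLinearMap.inr ℝ ℝ E)) :=
      (hG.fderiv_right (by exact_mod_cast le_top)).clm_comp contDiff_const
    have h1 : ∀ p : ℝ × E, iteratedFDeriv ℝ (k+1) (fun y => G (p.1, y)) p.2
        = (continuousMultilinearCurryRightEquiv' ℝ k E X).symm
            (iteratedFDeriv ℝ k
              (fun y => (fderiv ℝ G (p.1, y)).comp (ContinuousLinearMap.inr ℝ ℝ E)) p.2) := by
      intro p
      rw [iteratedFDeriv_succ_eq_comp_right, Function.comp_apply]
      exact congrArg _ (congrArg (fun f => iteratedFDeriv ℝ k f p.2)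
        (funext fun y => myFderivSlice hG p.1 y))
    simp only [h1]
    exact (LinearIsometryEquiv.continuous _).comp (IH (fun p : ℝ × E => (fderiv ℝ G p).comp (ContinuousLinearMap.inr ℝ ℝ E)) hsm)
end MyAux

theorem mySmoothTendsto {E X : Type} [NormedAddCommGroup E] [NormedSpace ℝ E]
    [NormedAddCommGroup X] [NormedSpace ℝ X] {α : Type} {l : Filter α}
    {q : α → SmoothFn E X} {L : SmoothFn E X}
    (h : ∀ (k : ℕ) (K : Set E), IsCompact K → ∀ ε > 0,
      ∀ᶠ t in l, ∀ x ∈ K,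
        dist (iteratedFDeriv ℝ k L.1 x) (iteratedFDeriv ℝ k (q t).1 x) < ε) :
    Tendsto q l (𝓝 L) := by
  have hn : (𝓝 L : Filter (SmoothFn E X))
      = ⨅ k : ℕ, @nhds _ (TopologicalSpace.induced
          (fun f : SmoothFn E X =>
            ContinuousMap.mk (iteratedFDeriv ℝ k f.1)
              (f.2.continuous_iteratedFDeriv (mod_cast le_top)))
          ContinuousMap.compactOpen) L := nhds_iInf
  rw [hn, tendsto_iInf]
  intro k
  rw [nhds_induced, tendsto_comap_iff]
  rw [ContinuousMap.tendsto_iff_forall_isCompact_tendstoUniformlyOn]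
  intro K hK
  rw [Metric.tendstoUniformlyOn_iff]
  intro ε hε
  filter_upwards [h k K hK ε hε] with t ht x hx
  simpa using ht x hx


set_option maxHeartbeats 1000000 in
/-- The difference quotient `(γ∘(η + tη₁) − γ∘η)/t` converges, as `t → 0`, to
`x ↦ dγ(η(x); η₁(x))` in the compact-open `C^∞` topology. -/
theorem difference_quotient_tendsto (d n m : ℕ)
    (γ : SmoothFn (Fin n → ℝ) (Fin m → ℝ)) (η η₁ : SmoothFn (Fin d → ℝ) (Fin n → ℝ)) :
    Filter.Tendsto
      (fun t : ℝ => t⁻¹ •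
        ((⟨γ.1 ∘ (η.1 + t • η₁.1), γ.2.comp (η.2.add (η₁.2.const_smul t))⟩ :
            SmoothFn (Fin d → ℝ) (Fin m → ℝ)) -
          (⟨γ.1 ∘ η.1, γ.2.comp η.2⟩ : SmoothFn (Fin d → ℝ) (Fin m → ℝ))))
      (nhdsWithin (0:ℝ) {(0:ℝ)}ᶜ)
      (nhds (⟨fun x => fderiv ℝ γ.1 (η.1 x) (η₁.1 x),
        ((γ.2.fderiv_right (by exact_mod_cast le_top)).comp η.2).clm_apply η₁.2⟩ : SmoothFn (Fin d → ℝ) (Fin m → ℝ))) := by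
  refine mySmoothTendsto ?_
  intro k K hK ε hε
  -- the jointly smooth composed map and its t-derivative
  have hψ : ContDiff ℝ (⊤:ℕ∞) (fun p : ℝ × (Fin d → ℝ) => η.1 p.2 + p.1 • η₁.1 p.2) :=
    (η.2.comp contDiff_snd).add (contDiff_fst.smul (η₁.2.comp contDiff_snd))
  set G : ℝ × (Fin d → ℝ) → (Fin m → ℝ) := fun p => γ.1 (η.1 p.2 + p.1 • η₁.1 p.2) with hGdef
  have hG : ContDiff ℝ (⊤:ℕ∞) G := γ.2.comp hψ
  set D : ℝ × (Fin d → ℝ) → (Fin m → ℝ) := fun p => fderiv ℝ G p (1, 0) with hDdef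
  have hD : ContDiff ℝ (⊤:ℕ∞) D :=
    (hG.fderiv_right (by exact_mod_cast le_top)).clm_apply contDiff_const
  have hD0 : ∀ y, D (0, y) = fderiv ℝ γ.1 (η.1 y) (η₁.1 y) := by
    intro y
    have hη : HasFDerivAt (fun p : ℝ × (Fin d → ℝ) => η.1 p.2)
        ((fderiv ℝ η.1 y).comp (ContinuousLinearMap.snd ℝ ℝ (Fin d → ℝ))) (0, y) :=
      ((η.2.differentiable (by simp) y).hasFDerivAt).comp (0, y) hasFDerivAt_snd
    have hη₁ : HasFDerivAt (fun p : ℝ × (Fin d → ℝ) => η₁.1 p.2)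
        ((fderiv ℝ η₁.1 y).comp (ContinuousLinearMap.snd ℝ ℝ (Fin d → ℝ))) (0, y) :=
      ((η₁.2.differentiable (by simp) y).hasFDerivAt).comp (0, y) hasFDerivAt_snd
    have hsm : HasFDerivAt (fun p : ℝ × (Fin d → ℝ) => η.1 p.2 + p.1 • η₁.1 p.2)
        (((fderiv ℝ η.1 y).comp (ContinuousLinearMap.snd ℝ ℝ (Fin d → ℝ))) +
          ((0:ℝ) • ((fderiv ℝ η₁.1 y).comp (ContinuousLinearMap.snd ℝ ℝ (Fin d → ℝ))) +
            (ContinuousLinearMap.fst ℝ ℝ (Fin d → ℝ)).smulRight (η₁.1 y))) (0, y) :=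
      hη.add (hasFDerivAt_fst.smul hη₁)
    have hγ : HasFDerivAt γ.1 (fderiv ℝ γ.1 (η.1 y + (0:ℝ) • η₁.1 y)) (η.1 y + (0:ℝ) • η₁.1 y) :=
      (γ.2.differentiable (by simp) _).hasFDerivAt
    have hGy : fderiv ℝ G (0, y) = (fderiv ℝ γ.1 (η.1 y + (0:ℝ) • η₁.1 y)).comp
        (((fderiv ℝ η.1 y).comp (ContinuousLinearMap.snd ℝ ℝ (Fin d → ℝ))) +
          ((0:ℝ) • ((fderiv ℝ η₁.1 y).comp (ContinuousLinearMap.snd ℝ ℝ (Fin d → ℝ))) +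
            (ContinuousLinearMap.fst ℝ ℝ (Fin d → ℝ)).smulRight (η₁.1 y))) :=
      (hγ.comp (0, y) hsm).fderiv
    show (fderiv ℝ G (0, y)) (1, 0) = _
    rw [hGy]
    simp
  -- iterated x-derivatives of G and D
  set B : ℝ × (Fin d → ℝ) → ContinuousMultilinearMap ℝ (fun _ : Fin k => (Fin d → ℝ)) (Fin m → ℝ) :=
    fun p => iteratedFDeriv ℝ k (fun y => G (p.1, y)) p.2 with hBdef
  set Bt : ℝ × (Fin d → ℝ) → ContinuousMultilinearMap ℝ (fun _ : Fin k => (Fin d → ℝ)) (Fin m → ℝ) :=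
    fun p => iteratedFDeriv ℝ k (fun y => D (p.1, y)) p.2 with hBtdef
  have hBt_cont : Continuous Bt := myContP k D hD
  have hder : ∀ (s : ℝ) (x : Fin d → ℝ), HasDerivAt (fun u => B (u, x)) (Bt (s, x)) s :=
    fun s x => myDerQ k G hG s x
  -- uniform continuity of Bt on [-1,1] × K
  obtain ⟨δ, hδpos, hδ⟩ := Metric.uniformContinuousOn_iff.1
    (((isCompact_Icc (a := (-1:ℝ)) (b := 1)).prod hK).uniformContinuousOn_of_continuous
      hBt_cont.continuousOn) (ε/2) (half_pos hε)
  have hev : ∀ᶠ t in (𝓝[≠](0:ℝ)), t ≠ 0 ∧ |t| < min δ 1 := by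
    have h1 : ∀ᶠ t in (𝓝 (0:ℝ)), |t| < min δ 1 := by
      have := Metric.ball_mem_nhds (0:ℝ) (lt_min hδpos one_pos)
      filter_upwards [this] with t ht
      simpa [Real.dist_eq] using ht
    filter_upwards [self_mem_nhdsWithin, h1.filter_mono nhdsWithin_le_nhds] with t h1 h2
    exact ⟨h1, h2⟩
  filter_upwards [hev] with t ht x hx
  obtain ⟨htne, htlt⟩ := ht
  have htδ : |t| < δ := lt_of_lt_of_le htlt (min_le_left _ _)
  have ht1 : |t| ≤ 1 := le_of_lt (lt_of_lt_of_le htlt (min_le_right _ _))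
  have htpos : 0 < |t| := abs_pos.2 htne
  -- identify the k-th derivative of the difference quotient
  have hGsl : ∀ s : ℝ, ContDiff ℝ (⊤:ℕ∞) (fun y => G (s, y)) :=
    fun s => hG.comp (contDiff_const.prodMk contDiff_id)
  have hq1 : (fun y => t⁻¹ • ((γ.1 ∘ (η.1 + t • η₁.1)) y - (γ.1 ∘ η.1) y))
      = fun y => t⁻¹ • (G (t, y) - G (0, y)) := by
    funext y
    simp [hGdef, Function.comp]
  have e1 : iteratedFDeriv ℝ k (fun y => t⁻¹ • (G (t, y) - G (0, y))) x
      = t⁻¹ • (B (t, x) - B (0, x)) := by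
    have hsub : ContDiff ℝ (k : ℕ∞) (fun y => G (t, y) - G (0, y)) :=
      ((hGsl t).sub (hGsl 0)).of_le (by exact_mod_cast le_top)
    have h1 : ContDiff ℝ (k : ℕ∞) (fun y => G (t, y)) := (hGsl t).of_le (by exact_mod_cast le_top)
    have h0 : ContDiff ℝ (k : ℕ∞) (fun y => G (0, y)) := (hGsl 0).of_le (by exact_mod_cast le_top)
    rw [iteratedFDeriv_const_smul_apply' hsub.contDiffAt]
    congr 1
    have hsplit : (fun y => G (t, y) - G (0, y))
        = (fun y => G (t, y)) + (-(fun y => G (0, y))) := by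
      funext y; simp [sub_eq_add_neg]
    rw [hsplit, iteratedFDeriv_add_apply (g := -fun y => G (0, y)) h1.contDiffAt (by exact h0.neg.contDiffAt),
      iteratedFDeriv_neg_apply, sub_eq_add_neg]
  -- identify the k-th derivative of the limit
  have hL : iteratedFDeriv ℝ k (fun y => fderiv ℝ γ.1 (η.1 y) (η₁.1 y)) x = Bt (0, x) := by
    have : (fun y => fderiv ℝ γ.1 (η.1 y) (η₁.1 y)) = fun y => D (0, y) :=
      funext fun y => (hD0 y).symm
    rw [this]
  -- mean value estimate
  have habs : ∀ s ∈ uIcc (0:ℝ) t, |s| ≤ |t| := by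
    intro s hs
    rcases Set.mem_uIcc.1 hs with ⟨h1, h2⟩ | ⟨h1, h2⟩
    · rw [abs_of_nonneg h1]; exact le_trans h2 (le_abs_self t)
    · rw [abs_of_nonpos h2]; rw [abs_of_nonpos (le_trans h1 h2)]; exact neg_le_neg h1
  have key : ‖(B (t, x) - t • Bt (0, x)) - (B (0, x) - (0:ℝ) • Bt (0, x))‖ ≤ (ε/2) * ‖t - 0‖ := by
    refine Convex.norm_image_sub_le_of_norm_hasFDerivWithin_le
      (f := fun s : ℝ => B (s, x) - s • Bt (0, x))
      (f' := fun s : ℝ => ContinuousLinearMap.smulRight (1 : ℝ →L[ℝ] ℝ) (Bt (s, x) - Bt (0, x)))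
      (fun s _ => ?_) (fun s hs => ?_) (convex_uIcc 0 t) (left_mem_uIcc) (right_mem_uIcc)
    · have hd : HasDerivAt (fun s : ℝ => B (s, x) - s • Bt (0, x)) (Bt (s, x) - Bt (0, x)) s := by
        have := (hder s x).sub ((hasDerivAt_id s).smul_const (Bt (0, x)))
        rw [one_smul] at this
        exact this
      exact (hasDerivAt_iff_hasFDerivAt.1 hd).hasFDerivWithinAt
    · have hsx : ((s, x) : ℝ × (Fin d → ℝ)) ∈ (Icc (-1:ℝ) 1) ×ˢ K := by
        refine ⟨?_, hx⟩
        have := le_trans (habs s hs) ht1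
        exact abs_le.1 this
      have h0x : (((0:ℝ), x) : ℝ × (Fin d → ℝ)) ∈ (Icc (-1:ℝ) 1) ×ˢ K := by
        refine ⟨?_, hx⟩
        constructor <;> norm_num
      have hdist : dist ((s, x) : ℝ × (Fin d → ℝ)) ((0:ℝ), x) < δ := by
        rw [Prod.dist_eq]
        simp only [dist_self, Real.dist_eq, sub_zero]
        exact lt_of_le_of_lt (by simp [habs s hs]) htδ
      have := hδ _ hsx _ h0x hdist
      rw [dist_eq_norm] at this
      calc ‖ContinuousLinearMap.smulRight (1 : ℝ →L[ℝ] ℝ) (Bt (s, x) - Bt (0, x))‖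
          = ‖Bt (s, x) - Bt (0, x)‖ := by
            rw [ContinuousLinearMap.norm_smulRight_apply]; simp
        _ ≤ ε / 2 := le_of_lt this
  -- conclude
  have hnorm : ‖B (t, x) - B (0, x) - t • Bt (0, x)‖ ≤ (ε/2) * |t| := by
    have : (B (t, x) - t • Bt (0, x)) - (B (0, x) - (0:ℝ) • Bt (0, x))
        = B (t, x) - B (0, x) - t • Bt (0, x) := by
      simp; abel
    rw [this] at key
    simpa [Real.norm_eq_abs] using key
  have hfinal : dist (Bt (0, x)) (t⁻¹ • (B (t, x) - B (0, x))) < ε := by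
    rw [dist_eq_norm]
    have hrw : Bt (0, x) - t⁻¹ • (B (t, x) - B (0, x))
        = (-t⁻¹) • (B (t, x) - B (0, x) - t • Bt (0, x)) := by
      have h1 : t⁻¹ * t = 1 := inv_mul_cancel₀ htne
      match_scalars <;> field_simp
    rw [hrw, norm_smul (-t⁻¹) (B (t, x) - B (0, x) - t • Bt (0, x))]
    simp only [norm_neg, Real.norm_eq_abs, abs_inv]
    calc |t|⁻¹ * ‖B (t, x) - B (0, x) - t • Bt (0, x)‖
        ≤ |t|⁻¹ * ((ε/2) * |t|) := by
          exact mul_le_mul_of_nonneg_left hnorm (inv_nonneg.2 (abs_nonneg t))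
      _ = ε / 2 := by field_simp
      _ < ε := half_lt_self hε
  show dist (iteratedFDeriv ℝ k (fun y => fderiv ℝ γ.1 (η.1 y) (η₁.1 y)) x)
      (iteratedFDeriv ℝ k (fun y => t⁻¹ • ((γ.1 ∘ (η.1 + t • η₁.1)) y - (γ.1 ∘ η.1) y)) x) < ε
  rw [hq1, e1, hL]
  exact hfinal
end

section
/- There exists a zero-neighbourhood V in C_c^∞(ℝ) (for the locally convex inductive limit topology) such that for all sequences k = (k_n) ∈ ℕ₀^ℤ and e = (ε_n) ∈ (ℝ⁺)^ℤ, the image of the basic neighbourhood V(k, e) under the map γ ↦ γ∘γ − γ(0) is not contained in V. -/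
open Filter Topology Set

variable {E F : Type*} [NormedAddCommGroup E] [NormedSpace ℝ E]
  [NormedAddCommGroup F] [NormedSpace ℝ F]

universe u

section Aux

open Set Function Filter Topology

/-- Forget compact support. -/
noncomputable def toSm (γ : TestFn ℝ) : SmoothFn ℝ ℝ := ⟨γ.1, γ.2.1⟩

/-- The interval `[n - 1/2, n + 1/2]`. -/
def Ivl (n : ℕ) : Set ℝ := Set.Icc ((n : ℝ) - 1/2) ((n : ℝ) + 1/2)

instance (n : ℕ) : CompactSpace (Ivl n) := by unfold Ivl; infer_instance

/-- The `k`-th derivative as continuous map, as in the topology definition. -/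
noncomputable def Phi (k : ℕ) (f : SmoothFn ℝ ℝ) :
    C(ℝ, ContinuousMultilinearMap ℝ (fun _ : Fin k => ℝ) ℝ) :=
  ContinuousMap.mk (iteratedFDeriv ℝ k f.1)
    (f.2.continuous_iteratedFDeriv (mod_cast le_top))

noncomputable def eCM (k : ℕ) : C(ContinuousMultilinearMap ℝ (fun _ : Fin k => ℝ) ℝ, ℝ) :=
  ⟨(ContinuousMultilinearMap.piFieldEquiv ℝ (Fin k) ℝ).symm,
   (ContinuousMultilinearMap.piFieldEquiv ℝ (Fin k) ℝ).symm.continuous⟩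

noncomputable def dmap (k : ℕ) (f : SmoothFn ℝ ℝ) : C(Ivl k, ℝ) :=
  (eCM k).comp ((Phi k f).restrict (Ivl k))

lemma dmap_apply (k : ℕ) (f : SmoothFn ℝ ℝ) (x : Ivl k) :
    dmap k f x = iteratedDeriv k f.1 (x : ℝ) := by
  have := congrFun (iteratedDeriv_eq_equiv_comp (𝕜 := ℝ) (n := k) (f := f.1)) (x : ℝ)
  simpa [dmap, eCM, Phi, ContinuousMap.restrict] using this.symm

lemma continuous_dmap (k N : ℕ) :
    Continuous (fun g : StepFn ℝ N => dmap k g.toSmoothFn) := by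
  refine (ContinuousMap.continuous_postcomp (eCM k)).comp ?_
  refine (ContinuousMap.continuous_restrict (Ivl k)).comp ?_
  have h1 : Continuous (StepFn.toSmoothFn (F := ℝ) (N := N)) :=
    continuous_induced_dom
  exact (show Continuous (Phi k) from continuous_iInf_dom continuous_induced_dom).comp h1

end Aux
section Aux2

open Set Function Filter Topology

lemma itd_zero_fun (n : ℕ) (x : ℝ) : iteratedDeriv n (fun _ : ℝ => (0:ℝ)) x = 0 := by
  rw [iteratedDeriv_eq_iteratedFDeriv]
  have : (fun _ : ℝ => (0:ℝ)) = (0 : ℝ → ℝ) := rfl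
  rw [this]
  have h2 : iteratedFDeriv ℝ n (0 : ℝ → ℝ) = 0 := iteratedFDeriv_zero_fun
  rw [h2]
  simp

lemma itd_eq_zero_of_nmem {f : ℝ → ℝ} {x : ℝ} (h : x ∉ tsupport f) (n : ℕ) :
    iteratedDeriv n f x = 0 := by
  have hev : f =ᶠ[nhds x] (fun _ => 0) :=
    Filter.eventuallyEq_iff_exists_mem.2
      ⟨(tsupport f)ᶜ, (isClosed_tsupport f).isOpen_compl.mem_nhds h,
        fun y hy => image_eq_zero_of_notMem_tsupport hy⟩
  rw [hev.iteratedDeriv_eq n, itd_zero_fun]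

private lemma cdo {f : ℝ → ℝ} (hf : ContDiff ℝ (⊤:ℕ∞) f) (n : ℕ) :
    ContDiffOn ℝ n f Set.univ :=
  (hf.of_le (mod_cast le_top)).contDiffOn

lemma itd_add {f g : ℝ → ℝ} (hf : ContDiff ℝ (⊤:ℕ∞) f) (hg : ContDiff ℝ (⊤:ℕ∞) g)
    (n : ℕ) (x : ℝ) :
    iteratedDeriv n (f + g) x = iteratedDeriv n f x + iteratedDeriv n g x := by
  simp only [← iteratedDerivWithin_univ]
  exact iteratedDerivWithin_add (Set.mem_univ x) uniqueDiffOn_univ (cdo hf n x (Set.mem_univ x)) (cdo hg n x (Set.mem_univ x))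

lemma itd_sub {f g : ℝ → ℝ} (hf : ContDiff ℝ (⊤:ℕ∞) f) (hg : ContDiff ℝ (⊤:ℕ∞) g)
    (n : ℕ) (x : ℝ) :
    iteratedDeriv n (f - g) x = iteratedDeriv n f x - iteratedDeriv n g x := by
  simp only [← iteratedDerivWithin_univ]
  exact iteratedDerivWithin_sub (Set.mem_univ x) uniqueDiffOn_univ (cdo hf n x (Set.mem_univ x)) (cdo hg n x (Set.mem_univ x))

lemma itd_const_mul (A : ℝ) {f : ℝ → ℝ} (hf : ContDiff ℝ (⊤:ℕ∞) f) (n : ℕ) (x : ℝ) :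
    iteratedDeriv n (fun y => A * f y) x = A * iteratedDeriv n f x := by
  simp only [← iteratedDerivWithin_univ]
  exact iteratedDerivWithin_const_mul (Set.mem_univ x) uniqueDiffOn_univ A (cdo hf n x (Set.mem_univ x))

lemma itd_comp_mul (b : ℝ) {f : ℝ → ℝ} (hf : ContDiff ℝ (⊤:ℕ∞) f) (n : ℕ) (x : ℝ) :
    iteratedDeriv n (fun y => f (b * y)) x = b ^ n * iteratedDeriv n f (b * x) :=
  congrFun (iteratedDeriv_comp_const_mul (hf.of_le (mod_cast le_top)) b) x

lemma itd_const (C : ℝ) (n : ℕ) (hn : n ≠ 0) (x : ℝ) :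
    iteratedDeriv n (fun _ : ℝ => C) x = 0 := by
  obtain ⟨m, rfl⟩ := Nat.exists_eq_succ_of_ne_zero hn
  rw [iteratedDeriv_succ']
  have : deriv (fun _ : ℝ => C) = fun _ : ℝ => (0:ℝ) := by
    funext y; exact deriv_const y C
  rw [this, itd_zero_fun]

lemma hcs_itd {f : ℝ → ℝ} (hs : HasCompactSupport f) (n : ℕ) :
    HasCompactSupport (iteratedDeriv n f) := by
  induction n with
  | zero => simpa using hs
  | succ n ih => rw [iteratedDeriv_succ]; exact ih.deriv

lemma exists_deriv_bound {f : ℝ → ℝ} (hf : ContDiff ℝ (⊤:ℕ∞) f) (hs : HasCompactSupport f)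
    (J : ℕ) : ∃ M : ℝ, 1 ≤ M ∧ ∀ j ≤ J, ∀ x, |iteratedDeriv j f x| ≤ M := by
  induction J with
  | zero =>
    obtain ⟨C, hC⟩ := hs.exists_bound_of_continuous hf.continuous
    refine ⟨max C 1, le_max_right _ _, fun j hj x => ?_⟩
    interval_cases j
    have := hC x
    rw [Real.norm_eq_abs] at this
    simpa using this.trans (le_max_left _ _)
  | succ J ih =>
    obtain ⟨M, hM1, hM⟩ := ih
    obtain ⟨C, hC⟩ := (hcs_itd hs (J+1)).exists_bound_of_continuous
      (hf.continuous_iteratedDeriv (J+1) (mod_cast le_top))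
    refine ⟨max M C, hM1.trans (le_max_left _ _), fun j hj x => ?_⟩
    rcases Nat.lt_succ_iff_lt_or_eq.mp (Nat.lt_succ_of_le hj) with h | h
    · exact (hM j (Nat.lt_succ_iff.mp h) x).trans (le_max_left _ _)
    · subst h
      have := hC x
      rw [Real.norm_eq_abs] at this
      exact this.trans (le_max_right _ _)

lemma exists_itd_ne_zero {f : ℝ → ℝ} (hf : ContDiff ℝ (⊤:ℕ∞) f) (hs : HasCompactSupport f)
    {x₀ : ℝ} (h0 : f x₀ ≠ 0) (m : ℕ) : ∃ t, iteratedDeriv m f t ≠ 0 := by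
  induction m with
  | zero => exact ⟨x₀, by simpa using h0⟩
  | succ m ih =>
    by_contra hcon
    push_neg at hcon
    obtain ⟨t, ht⟩ := ih
    have hdiff : Differentiable ℝ (iteratedDeriv m f) :=
      hf.differentiable_iteratedDeriv m (by exact_mod_cast (lt_top_iff_ne_top.mpr (by simp) : (m:ℕ∞) < ⊤))
    have hconst : ∀ y, iteratedDeriv m f y = iteratedDeriv m f t := by
      intro y
      refine is_const_of_deriv_eq_zero hdiff (fun z => ?_) y t
      rw [← iteratedDeriv_succ]; exact hcon z
    obtain ⟨y, hy⟩ : ∃ y, y ∉ tsupport (iteratedDeriv m f) := by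
      by_contra hall
      push_neg at hall
      exact (hcs_itd hs m).ne_univ (Set.eq_univ_iff_forall.2 hall)
    have h1 : iteratedDeriv m f y = 0 := image_eq_zero_of_notMem_tsupport hy
    rw [hconst y] at h1
    exact ht h1

end Aux2
section Aux3

open Set Function Filter Topology

noncomputable def Qn (n : ℕ) (γ : TestFn ℝ) : ℝ := ‖dmap n (toSm γ)‖

lemma Qn_nonneg (n : ℕ) (γ : TestFn ℝ) : 0 ≤ Qn n γ := norm_nonneg _

lemma Qn_eventually_zero (γ : TestFn ℝ) :
    ∃ N : ℕ, ∀ n ≥ N, Qn n γ = 0 := by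
  obtain ⟨r, hr⟩ := γ.2.2.isBounded.subset_closedBall 0
  refine ⟨⌈r⌉₊ + 1, fun n hn => ?_⟩
  have hz : dmap n (toSm γ) = 0 := by
    ext x
    rw [dmap_apply]
    have hx1 : ((⌈r⌉₊ : ℝ) + 1) - 1/2 ≤ (x:ℝ) := by
      have h1 : ((n:ℝ)) - 1/2 ≤ (x:ℝ) := x.2.1
      have h2 : ((⌈r⌉₊ + 1 : ℕ) : ℝ) ≤ (n : ℝ) := by exact_mod_cast hn
      push_cast at h2
      linarith
    have hxr : r < (x:ℝ) := by
      have : r ≤ (⌈r⌉₊ : ℝ) := Nat.le_ceil r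
      linarith
    have hnm : (x:ℝ) ∉ tsupport γ.1 := by
      intro hmem
      have := hr hmem
      rw [Metric.mem_closedBall, Real.dist_eq, sub_zero] at this
      have := le_abs_self (x:ℝ)
      linarith [abs_le.mp (by rwa [] : |(x:ℝ)| ≤ r)]
    simpa [toSm] using itd_eq_zero_of_nmem hnm n
  rw [Qn, hz, norm_zero]

lemma bddAbove_Qn (γ : TestFn ℝ) : BddAbove (Set.range fun n => Qn n γ) := by
  obtain ⟨N, hN⟩ := Qn_eventually_zero γ
  have hsub : (Set.range fun n => Qn n γ) ⊆ ((fun n => Qn n γ) '' Set.Iic N) ∪ {0} := by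
    rintro - ⟨n, rfl⟩
    rcases le_or_gt n N with h | h
    · exact Or.inl ⟨n, h, rfl⟩
    · exact Or.inr (by simp [hN n h.le])
  exact (((Set.finite_Iic N).image _).union (Set.finite_singleton 0)).bddAbove.mono hsub

lemma dmap_add (n : ℕ) (γ δ : TestFn ℝ) :
    dmap n (toSm (γ + δ)) = dmap n (toSm γ) + dmap n (toSm δ) := by
  ext x
  simp only [ContinuousMap.add_apply, dmap_apply]
  exact itd_add γ.2.1 δ.2.1 n x

lemma Qn_add_le (n : ℕ) (γ δ : TestFn ℝ) : Qn n (γ + δ) ≤ Qn n γ + Qn n δ := by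
  rw [Qn, dmap_add]; exact norm_add_le _ _

lemma Qn_neg (n : ℕ) (γ : TestFn ℝ) : Qn n (-γ) = Qn n γ := by
  rw [Qn, Qn]
  have : dmap n (toSm (-γ)) = -dmap n (toSm γ) := by
    ext x
    simp only [ContinuousMap.neg_apply, dmap_apply]
    exact iteratedDeriv_neg n γ.1 (x:ℝ)
  rw [this, norm_neg]

lemma Qn_smul (a : ℝ) (n : ℕ) (γ : TestFn ℝ) : Qn n (a • γ) = ‖a‖ * Qn n γ := by
  rw [Qn, Qn]
  have : dmap n (toSm (a • γ)) = a • dmap n (toSm γ) := by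
    ext x
    simp only [ContinuousMap.smul_apply, dmap_apply, smul_eq_mul]
    exact itd_const_mul a γ.2.1 n (x:ℝ)
  rw [this]
  exact norm_smul a (dmap n (toSm γ))

lemma Qn_zero (n : ℕ) : Qn n (0 : TestFn ℝ) = 0 := by
  have hz : dmap n (toSm (0 : TestFn ℝ)) = 0 := by
    ext x
    rw [dmap_apply]
    exact itd_zero_fun n (x:ℝ)
  rw [Qn, hz, norm_zero]

noncomputable def Psn : Seminorm ℝ (TestFn ℝ) where
  toFun γ := ⨆ n, Qn n γ
  map_zero' := by simp only [Qn_zero]; exact ciSup_const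
  add_le' γ δ := by
    refine ciSup_le fun n => (Qn_add_le n γ δ).trans (add_le_add ?_ ?_)
    · exact le_ciSup (bddAbove_Qn γ) n
    · exact le_ciSup (bddAbove_Qn δ) n
  neg' γ := by simp only [Qn_neg]
  smul' a γ := by
    simp only [Qn_smul]
    exact (Real.mul_iSup_of_nonneg (norm_nonneg a) _).symm

lemma Psn_apply (γ : TestFn ℝ) : Psn γ = ⨆ n, Qn n γ := rfl

lemma Qn_le_Psn (n : ℕ) (γ : TestFn ℝ) : Qn n γ ≤ Psn γ := le_ciSup (bddAbove_Qn γ) n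

noncomputable def Qfam : SeminormFamily ℝ (TestFn ℝ) (Fin 1) := fun _ => Psn

noncomputable def tP : TopologicalSpace (TestFn ℝ) := Qfam.moduleFilterBasis.topology

lemma hpQ : @WithSeminorms ℝ (TestFn ℝ) (Fin 1) _ _ _ Qfam tP := by
  letI := tP
  exact ⟨rfl⟩

lemma ball_mem_tP : {γ : TestFn ℝ | Psn γ < 1} ∈ @nhds _ tP (0 : TestFn ℝ) := by
  letI := tP
  have hp := hpQ
  have h := hp.hasBasis_zero_ball.mem_of_mem (i := (({0} : Finset (Fin 1)), 1))
    (by norm_num)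
  refine Filter.mem_of_superset h ?_
  intro γ hγ
  have : (Finset.sup {0} Qfam) γ < 1 := (Seminorm.mem_ball_zero _).mp hγ
  simpa [Qfam, Finset.sup_singleton] using this

end Aux3
section Aux4

open Set Function Filter Topology

lemma Qn_zero_of_supp {γ : TestFn ℝ} {N : ℕ} (h : tsupport γ.1 ⊆ Set.Icc (-(N:ℝ)) N)
    {n : ℕ} (hn : N + 1 ≤ n) : Qn n γ = 0 := by
  have hz : dmap n (toSm γ) = 0 := by
    ext x
    rw [dmap_apply]
    have hx : (x:ℝ) ∉ tsupport γ.1 := by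
      intro hmem
      have h1 : (x:ℝ) ≤ (N:ℝ) := (h hmem).2
      have h2 : ((n:ℝ)) - 1/2 ≤ (x:ℝ) := x.2.1
      have h3 : ((N:ℝ)) + 1 ≤ (n:ℝ) := by exact_mod_cast hn
      linarith
    simpa [toSm] using itd_eq_zero_of_nmem hx n
  rw [Qn, hz, norm_zero]

lemma tP_topologicalAddGroup : @IsTopologicalAddGroup (TestFn ℝ) tP _ := by
  letI := tP; exact hpQ.topologicalAddGroup

lemma tP_continuousSMul : @ContinuousSMul ℝ (TestFn ℝ) _ _ tP :=
  Qfam.moduleFilterBasis.continuousSMul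

lemma tP_locallyConvex : @LocallyConvexSpace ℝ (TestFn ℝ) _ _ _ _ tP := by
  letI := tP; exact hpQ.toLocallyConvexSpace

lemma tP_incl_continuous (N : ℕ) :
    Continuous[StepFn.topology N, tP] (StepFn.toTestFn (F := ℝ) (N := N)) := by
  letI := tP
  rw [continuous_iff_continuousAt]
  intro g₀
  rw [ContinuousAt, hpQ.tendsto_nhds]
  intro i ε hε
  have key : ∀ n : ℕ, Filter.Tendsto
      (fun g : StepFn ℝ N => Qn n (g.toTestFn - g₀.toTestFn)) (nhds g₀) (nhds 0) := by
    intro n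
    have hc := continuous_dmap n N
    have h2 : Filter.Tendsto
        (fun g : StepFn ℝ N => ‖dmap n g.toSmoothFn - dmap n g₀.toSmoothFn‖)
        (nhds g₀) (nhds 0) := by
      have := ((hc.tendsto g₀).sub (tendsto_const_nhds (x := dmap n g₀.toSmoothFn))).norm
      simpa using this
    refine h2.congr (fun g => ?_)
    rw [Qn]
    congr 1
    ext x
    simp only [ContinuousMap.sub_apply, dmap_apply]
    exact (itd_sub g.2.1 g₀.2.1 n (x:ℝ)).symm
  have hsum : Filter.Tendsto
      (fun g : StepFn ℝ N => ∑ n ∈ Finset.range (N+1), Qn n (g.toTestFn - g₀.toTestFn))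
      (nhds g₀) (nhds 0) := by
    have := tendsto_finset_sum (Finset.range (N+1))
      (fun n (_ : n ∈ Finset.range (N+1)) => key n)
    simpa using this
  have hev := hsum.eventually_lt_const hε
  refine hev.mono (fun g hg => ?_)
  have hsupp : tsupport (g.toTestFn - g₀.toTestFn).1 ⊆ Set.Icc (-(N:ℝ)) N := by
    refine (closure_mono (Function.support_sub g.1 g₀.1)).trans ?_
    rw [closure_union]
    exact Set.union_subset g.2.2 g₀.2.2
  have hP : Psn (g.toTestFn - g₀.toTestFn)
      ≤ ∑ n ∈ Finset.range (N+1), Qn n (g.toTestFn - g₀.toTestFn) := by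
    refine ciSup_le (fun n => ?_)
    rcases lt_or_ge n (N+1) with h | h
    · exact Finset.single_le_sum (fun m _ => Qn_nonneg m _) (Finset.mem_range.mpr h)
    · rw [Qn_zero_of_supp hsupp h]
      exact Finset.sum_nonneg (fun m _ => Qn_nonneg m _)
  exact lt_of_le_of_lt hP hg

lemma tP_mem :
    tP ∈ {t : TopologicalSpace (TestFn ℝ) |
      @IsTopologicalAddGroup (TestFn ℝ) t _ ∧ @ContinuousSMul ℝ (TestFn ℝ) _ _ t ∧
      @LocallyConvexSpace ℝ (TestFn ℝ) _ _ _ _ t ∧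
      ∀ N : ℕ, Continuous[StepFn.topology N, t] (StepFn.toTestFn (F := ℝ) (N := N))} :=
  ⟨tP_topologicalAddGroup, tP_continuousSMul, tP_locallyConvex, tP_incl_continuous⟩

lemma ball_mem_nhds_testFn : {γ : TestFn ℝ | Psn γ < 1} ∈ nhds (0 : TestFn ℝ) := by
  have hle : (TestFn.topology : TopologicalSpace (TestFn ℝ)) ≤ tP := sInf_le tP_mem
  exact nhds_mono hle ball_mem_tP
end Aux4
section Aux5

open Set Function Filter Topology

set_option maxHeartbeats 1000000 in
lemma key_construction (k : ℤ → ℕ) (e : ℤ → ℝ) (he : ∀ n, 0 < e n) :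
    ∃ γ ∈ Vset k e, 1 ≤ Psn (selfComp γ) := by
  classical
  -- basic data
  set K0 : ℕ := k 0 with hK0
  set m : ℕ := K0 + 2 with hm
  set mZ : ℤ := (m : ℤ) with hmZ
  set mR : ℝ := (m : ℝ) with hmR
  have hm2 : (2:ℝ) ≤ mR := by
    rw [hmR, hm]; push_cast; linarith [Nat.cast_nonneg (α := ℝ) K0]
  set En : ℝ := min (e (mZ-1)) (min (e mZ) (e (mZ+1))) with hEn_def
  have hEn : 0 < En := lt_min (he _) (lt_min (he _) (he _))
  set Kn : ℕ := max (k (mZ-1)) (max (k mZ) (k (mZ+1))) with hKn_def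
  -- bump function
  set χ : ContDiffBump (0:ℝ) := ⟨1/4, 1/2, by norm_num, by norm_num⟩ with hχdef
  set χf : ℝ → ℝ := fun x => χ x with hχf
  have hχc : ContDiff ℝ (⊤:ℕ∞) χf := χ.contDiff
  have hχs : HasCompactSupport χf := χ.hasCompactSupport
  have hχ0 : χf 0 = 1 := χ.one_of_mem_closedBall (Metric.mem_closedBall_self (by norm_num))
  have hχt : tsupport χf = Metric.closedBall 0 (1/2) := χ.tsupport_eq
  have hχz : ∀ j : ℕ, ∀ y : ℝ, (1/2:ℝ) < |y| → iteratedDeriv j χf y = 0 := by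
    intro j y hy
    refine itd_eq_zero_of_nmem ?_ j
    rw [hχt, Metric.mem_closedBall, Real.dist_eq, sub_zero]
    intro h; linarith
  -- the function ψ
  set ψ : ℝ → ℝ := fun t => t * χf t with hψdef
  have hψc : ContDiff ℝ (⊤:ℕ∞) ψ := contDiff_id.mul hχc
  have hψsupp : Function.support ψ ⊆ Function.support χf := by
    intro t ht
    simp only [Function.mem_support] at ht ⊢
    intro h0; exact ht (by rw [hψdef]; simp [h0])
  have hψs : HasCompactSupport ψ := hχs.mono hψsupp
  have hψt : tsupport ψ ⊆ Metric.closedBall 0 (1/2) := by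
    rw [← hχt]; exact closure_mono hψsupp
  have hψeq : ∀ t : ℝ, |t| ≤ 1/4 → ψ t = t := by
    intro t ht
    have h1 : χf t = 1 := χ.one_of_mem_closedBall
      (by rw [Metric.mem_closedBall, Real.dist_eq, sub_zero]; exact ht)
    rw [hψdef]; simp [h1]
  have hψz : ∀ j : ℕ, ∀ t : ℝ, (1/2:ℝ) < |t| → iteratedDeriv j ψ t = 0 := by
    intro j t ht
    refine itd_eq_zero_of_nmem (fun hmem => ?_) j
    have := hψt hmem
    rw [Metric.mem_closedBall, Real.dist_eq, sub_zero] at this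
    linarith
  -- bounds
  obtain ⟨Mψ, hMψ1, hMψ⟩ := exists_deriv_bound hψc hψs Kn
  obtain ⟨Mχ, hMχ1, hMχ⟩ := exists_deriv_bound hχc hχs K0
  -- small scalar c
  set c : ℝ := min 1 (En / (4*Mψ)) with hc_def
  have hc0 : 0 < c := lt_min one_pos (div_pos hEn (by linarith))
  have hc1 : c ≤ 1 := min_le_left _ _
  have hcM : c * Mψ ≤ En/4 := by
    have h1 : c ≤ En / (4*Mψ) := min_le_right _ _
    have hM0 : (0:ℝ) < Mψ := by linarith
    have h2 : (En / (4*Mψ)) * Mψ = En/4 := by field_simp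
    calc c * Mψ ≤ (En / (4*Mψ)) * Mψ := by nlinarith
    _ = En/4 := h2
  -- nontrivial derivative of χ at order m
  obtain ⟨t₀, ht₀⟩ := exists_itd_ne_zero hχc hχs (by rw [hχ0]; exact one_ne_zero) m
  set m0 : ℝ := |iteratedDeriv m χf t₀| with hm0_def
  have hm0 : 0 < m0 := abs_pos.mpr ht₀
  set D : ℝ := e 0 * m0 * c^m / (4*Mχ) with hD_def
  have hD : 0 < D := div_pos (mul_pos (mul_pos (he 0) hm0) (pow_pos hc0 m)) (by linarith)
  -- small scale s
  set s : ℝ := min (1/2) (min (Real.sqrt D) (c / (8*(|t₀|+1)))) with hs_def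
  have hs0 : 0 < s := lt_min (by norm_num)
    (lt_min (Real.sqrt_pos.mpr hD) (div_pos hc0 (by positivity)))
  have hs_half : s ≤ 1/2 := min_le_left _ _
  have hsD : s^2 ≤ D := by
    have h1 : s ≤ Real.sqrt D := le_trans (min_le_right _ _) (min_le_left _ _)
    calc s^2 ≤ (Real.sqrt D)^2 := by nlinarith
    _ = D := Real.sq_sqrt hD.le
  have hst : s * (|t₀|+1) ≤ c/8 := by
    have h1 : s ≤ c/(8*(|t₀|+1)) := le_trans (min_le_right _ _) (min_le_right _ _)
    have hT : (0:ℝ) < |t₀| + 1 := by positivity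
    have h2 : (c/(8*(|t₀|+1))) * (|t₀|+1) = c/8 := by field_simp
    calc s * (|t₀|+1) ≤ (c/(8*(|t₀|+1))) * (|t₀|+1) := by nlinarith
    _ = c/8 := h2
  -- amplitude A
  set A : ℝ := e 0 * s^K0 / (4*Mχ) with hA_def
  have hA : 0 < A := div_pos (mul_pos (he 0) (pow_pos hs0 _)) (by linarith)
  -- parts of γ
  set uf : ℝ → ℝ := fun y => A * χf (s⁻¹ * y) with huf_def
  set vf : ℝ → ℝ := fun x => c * ψ (x + (-mR)) with hvf_def
  have hinner_u : ContDiff ℝ (⊤:ℕ∞) (fun y : ℝ => χf (s⁻¹ * y)) :=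
    hχc.comp (contDiff_const.mul contDiff_id)
  have hinner_v : ContDiff ℝ (⊤:ℕ∞) (fun x : ℝ => ψ (x + (-mR))) :=
    hψc.comp (contDiff_id.add contDiff_const)
  have hufc : ContDiff ℝ (⊤:ℕ∞) uf := contDiff_const.mul hinner_u
  have hvfc : ContDiff ℝ (⊤:ℕ∞) vf := contDiff_const.mul hinner_v
  -- derivative formulas
  have hud : ∀ j : ℕ, ∀ y : ℝ,
      iteratedDeriv j uf y = A * (s⁻¹^j * iteratedDeriv j χf (s⁻¹ * y)) := by
    intro j y
    rw [huf_def, itd_const_mul A hinner_u j y, itd_comp_mul s⁻¹ hχc j y]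
  have hvd : ∀ j : ℕ, ∀ x : ℝ,
      iteratedDeriv j vf x = c * iteratedDeriv j ψ (x + (-mR)) := by
    intro j x
    rw [hvf_def, itd_const_mul c hinner_v j x,
      congrFun (iteratedDeriv_comp_add_const j ψ (-mR)) x]
  -- vanishing of u away from 0
  have hsinv2 : (2:ℝ) ≤ s⁻¹ := by
    rw [show s⁻¹ = 1/s by rw [one_div]]
    rw [le_div_iff₀ hs0]; linarith
  have hsinv1 : (1:ℝ) ≤ s⁻¹ := by linarith
  have hu0 : ∀ j : ℕ, ∀ y : ℝ, (1/2:ℝ) ≤ |y| → iteratedDeriv j uf y = 0 := by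
    intro j y hy
    rw [hud j y]
    have h1 : (1/2:ℝ) < |s⁻¹ * y| := by
      rw [abs_mul, abs_of_pos (inv_pos.mpr hs0)]
      nlinarith
    rw [hχz j _ h1, mul_zero, mul_zero]
  have hv0 : ∀ j : ℕ, ∀ x : ℝ, (1/2:ℝ) < |x - mR| → iteratedDeriv j vf x = 0 := by
    intro j x hx
    rw [hvd j x, hψz j _ (by rw [← sub_eq_add_neg]; exact hx), mul_zero]
  have huv : ∀ y : ℝ, (1/2:ℝ) ≤ |y| → uf y = 0 := by
    intro y hy; simpa using hu0 0 y hy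
  have hvv : ∀ x : ℝ, (1/2:ℝ) < |x - mR| → vf x = 0 := by
    intro x hx; simpa using hv0 0 x hx
  -- the test function γ
  have hγsupp : HasCompactSupport (fun x => uf x + vf x) := by
    refine IsCompact.of_isClosed_subset (isCompact_Icc (a := -(mR+1)) (b := mR+1))
      (isClosed_tsupport _) ?_
    refine closure_minimal ?_ isClosed_Icc
    intro x hx
    simp only [Function.mem_support] at hx
    by_contra hout
    simp only [Set.mem_Icc, not_and_or, not_le] at hout
    have hxabs : (1/2:ℝ) ≤ |x| ∧ (1/2:ℝ) < |x - mR| := by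
      rcases hout with h | h
      · exact ⟨by linarith [neg_le_abs x], by linarith [neg_le_abs (x - mR)]⟩
      · exact ⟨by linarith [le_abs_self x], by linarith [le_abs_self (x - mR)]⟩
    exact hx (by rw [huv x hxabs.1, hvv x hxabs.2, add_zero])
  set γ : TestFn ℝ := ⟨fun x => uf x + vf x, hufc.add hvfc, hγsupp⟩ with hγdef
  have hsplit : ∀ j : ℕ, ∀ x : ℝ,
      iteratedDeriv j γ.1 x = iteratedDeriv j uf x + iteratedDeriv j vf x :=
    fun j x => itd_add hufc hvfc j x
  -- bound for u
  have hu_bound : ∀ j ≤ K0, ∀ y : ℝ, |iteratedDeriv j uf y| ≤ e 0 / 4 := by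
    intro j hj y
    rw [hud j y, abs_mul, abs_mul, abs_of_pos hA,
      abs_of_pos (pow_pos (inv_pos.mpr hs0) j)]
    have h1 : |iteratedDeriv j χf (s⁻¹ * y)| ≤ Mχ := hMχ j hj _
    have h2 : s⁻¹^j ≤ s⁻¹^K0 := pow_le_pow_right₀ hsinv1 hj
    have hMχ0 : (0:ℝ) < Mχ := by linarith
    have h3 : A * (s⁻¹^K0 * Mχ) = e 0 / 4 := by
      rw [hA_def, inv_pow]
      have hsk : s^K0 ≠ 0 := (pow_pos hs0 K0).ne'
      field_simp
    calc A * (s⁻¹^j * |iteratedDeriv j χf (s⁻¹ * y)|) ≤ A * (s⁻¹^K0 * Mχ) := by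
          refine mul_le_mul_of_nonneg_left ?_ hA.le
          exact mul_le_mul h2 h1 (abs_nonneg _) (by positivity)
    _ = e 0 / 4 := h3
  -- bound for v
  have hv_bound : ∀ j ≤ Kn, ∀ x : ℝ, |iteratedDeriv j vf x| ≤ En / 4 := by
    intro j hj x
    rw [hvd j x, abs_mul, abs_of_pos hc0]
    calc c * |iteratedDeriv j ψ (x + -mR)|
        ≤ c * Mψ := mul_le_mul_of_nonneg_left (hMψ j hj _) hc0.le
    _ ≤ En/4 := hcM
  -- γ ∈ Vset k e
  have hγV : γ ∈ Vset k e := by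
    intro n j hj x hx
    obtain ⟨hx1, hx2⟩ := hx
    rw [hsplit j x]
    have hub : |iteratedDeriv j uf x| ≤ e n / 4 := by
      by_cases hn : n = 0
      · subst hn
        exact hu_bound j hj x
      · have hxn : (1/2:ℝ) ≤ |x| := by
          rcases lt_or_gt_of_ne hn with h | h
          · have hn1 : n ≤ -1 := by omega
            have : (n:ℝ) ≤ -1 := by exact_mod_cast hn1
            linarith [neg_le_abs x]
          · have hn1 : (1:ℤ) ≤ n := h
            have : (1:ℝ) ≤ (n:ℝ) := by exact_mod_cast hn1
            linarith [le_abs_self x]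
        rw [hu0 j x hxn, abs_zero]
        linarith [he n]
    have hvb : |iteratedDeriv j vf x| ≤ e n / 4 := by
      by_cases hn : n = mZ - 1 ∨ n = mZ ∨ n = mZ + 1
      · have hkn : k n ≤ Kn := by
          rcases hn with h | h | h <;> rw [h]
          · exact le_max_left _ _
          · exact le_trans (le_max_left _ _) (le_max_right _ _)
          · exact le_trans (le_max_right _ _) (le_max_right _ _)
        have hen : En ≤ e n := by
          rcases hn with h | h | h <;> rw [h]
          · exact min_le_left _ _
          · exact le_trans (min_le_right _ _) (min_le_left _ _)
          · exact le_trans (min_le_right _ _) (min_le_right _ _)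
        calc |iteratedDeriv j vf x| ≤ En/4 := hv_bound j (le_trans hj hkn) x
        _ ≤ e n/4 := by linarith
      · push_neg at hn
        obtain ⟨h1, h2, h3⟩ := hn
        have hfar : (1/2:ℝ) < |x - mR| := by
          have hZcases : n ≤ mZ - 2 ∨ mZ + 2 ≤ n := by omega
          rcases hZcases with h | h
          · have hcast : (n:ℝ) ≤ mR - 2 := by
              have h' : ((n:ℤ):ℝ) ≤ ((mZ - 2 : ℤ):ℝ) := by exact_mod_cast h
              rw [hmZ, hmR] at *
              push_cast at h' ⊢
              linarith
            linarith [neg_le_abs (x - mR)]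
          · have hcast : mR + 2 ≤ (n:ℝ) := by
              have h' : ((mZ + 2 : ℤ):ℝ) ≤ ((n:ℤ):ℝ) := by exact_mod_cast h
              rw [hmZ, hmR] at *
              push_cast at h' ⊢
              linarith
            linarith [le_abs_self (x - mR)]
        rw [hv0 j x hfar, abs_zero]
        linarith [he n]
    calc |iteratedDeriv j uf x + iteratedDeriv j vf x|
        ≤ |iteratedDeriv j uf x| + |iteratedDeriv j vf x| := abs_add_le _ _
    _ ≤ e n/4 + e n/4 := add_le_add hub hvb
    _ < e n := by linarith [he n]
  -- witness point
  set xs : ℝ := mR + (s/c) * t₀ with hxs_def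
  have hxsm : |xs - mR| ≤ 1/8 := by
    rw [hxs_def, add_sub_cancel_left, abs_mul, abs_div, abs_of_pos hs0, abs_of_pos hc0]
    rw [div_mul_eq_mul_div, div_le_iff₀ hc0]
    nlinarith [hst, hs0, abs_nonneg t₀, hc0]
  have hxsI : xs ∈ Ivl m := by
    have h := abs_le.mp hxsm
    simp only [Ivl, Set.mem_Icc, ← hmR]
    constructor <;> [linarith [h.1]; linarith [h.2]]
  -- local form of selfComp γ near xs
  set w : ℝ → ℝ := fun z => A * χf ((c/s) * z) with hw_def
  set g : ℝ → ℝ := fun x => w (x + (-mR)) - uf 0 with hg_def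
  have hinner_w : ContDiff ℝ (⊤:ℕ∞) (fun z : ℝ => χf ((c/s) * z)) :=
    hχc.comp (contDiff_const.mul contDiff_id)
  have hwc : ContDiff ℝ (⊤:ℕ∞) w := contDiff_const.mul hinner_w
  have hloc : (selfComp γ).1 =ᶠ[nhds xs] g := by
    have hmem : Set.Ioo (mR - 1/4) (mR + 1/4) ∈ nhds xs := by
      have h := abs_le.mp hxsm
      exact Ioo_mem_nhds (by linarith [h.1]) (by linarith [h.2])
    filter_upwards [hmem] with x hx
    obtain ⟨hx1, hx2⟩ := hx
    have hxm : |x - mR| ≤ 1/4 := abs_le.mpr ⟨by linarith, by linarith⟩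
    have hxm' := abs_le.mp hxm
    show γ.1 (γ.1 x) - γ.1 0 = g x
    have hufx : uf x = 0 := huv x (by linarith [le_abs_self x])
    have hψx : ψ (x + -mR) = x - mR := by
      rw [← sub_eq_add_neg]; exact hψeq _ hxm
    have hγx : γ.1 x = c * (x - mR) := by
      show uf x + vf x = c * (x - mR)
      rw [hufx, zero_add, hvf_def]
      simp only []
      rw [hψx]
    have hyabs : |c * (x - mR)| ≤ 1/4 := by
      rw [abs_mul, abs_of_pos hc0]; nlinarith [abs_nonneg (x - mR)]
    have hyabs' := abs_le.mp hyabs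
    have hγy : γ.1 (c * (x - mR)) = uf (c * (x - mR)) := by
      show uf (c * (x - mR)) + vf (c * (x - mR)) = uf (c * (x - mR))
      have hv' : vf (c * (x - mR)) = 0 := by
        apply hvv
        linarith [neg_le_abs (c * (x - mR) - mR)]
      rw [hv', add_zero]
    have hγ0 : γ.1 0 = uf 0 := by
      show uf 0 + vf 0 = uf 0
      have hv' : vf 0 = 0 := by
        apply hvv
        rw [zero_sub, abs_neg, abs_of_pos (by linarith : (0:ℝ) < mR)]
        linarith
      rw [hv', add_zero]
    rw [hγx, hγy, hγ0, hg_def]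
    simp only [hw_def, huf_def]
    have harg : s⁻¹ * (c * (x - mR)) = (c/s) * (x + -mR) := by
      rw [div_eq_mul_inv]; ring
    rw [harg]
  -- derivative at xs
  have hm_ne : m ≠ 0 := by omega
  have hder : iteratedDeriv m (selfComp γ).1 xs
      = A * ((c/s)^m * iteratedDeriv m χf ((c/s) * (xs + -mR))) := by
    rw [hloc.iteratedDeriv_eq m]
    have h2 : iteratedDeriv m g xs
        = iteratedDeriv m (fun x => w (x + -mR)) xs
          - iteratedDeriv m (fun _ : ℝ => uf 0) xs :=
      itd_sub (hwc.comp (contDiff_id.add contDiff_const)) contDiff_const m xs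
    rw [h2, itd_const (uf 0) m hm_ne xs, sub_zero,
      congrFun (iteratedDeriv_comp_add_const m w (-mR)) xs, hw_def,
      itd_const_mul A hinner_w m _,
      itd_comp_mul (c/s) hχc m _]
  have harg2 : (c/s) * (xs + -mR) = t₀ := by
    rw [hxs_def]
    field_simp
    ring
  have hval : |iteratedDeriv m (selfComp γ).1 xs| = A * ((c/s)^m * m0) := by
    rw [hder, harg2, abs_mul, abs_mul, abs_of_pos hA,
      abs_of_pos (pow_pos (div_pos hc0 hs0) m), hm0_def]
  have hge1 : (1:ℝ) ≤ A * ((c/s)^m * m0) := by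
    have hsne : s ≠ 0 := hs0.ne'
    have hMχ0 : (0:ℝ) < Mχ := by linarith
    have hkey : A * ((c/s)^m * m0) = D / s^2 := by
      rw [hA_def, hD_def, div_pow, hm, pow_add]
      field_simp
      ring
    rw [hkey, le_div_iff₀ (by positivity)]
    linarith
  -- conclude
  refine ⟨γ, hγV, ?_⟩
  have h1 : |dmap m (toSm (selfComp γ)) ⟨xs, hxsI⟩| ≤ Qn m (selfComp γ) := by
    have := (dmap m (toSm (selfComp γ))).norm_coe_le_norm ⟨xs, hxsI⟩
    rwa [Real.norm_eq_abs] at this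
  have h2 : dmap m (toSm (selfComp γ)) ⟨xs, hxsI⟩ = iteratedDeriv m (selfComp γ).1 xs :=
    dmap_apply m (toSm (selfComp γ)) ⟨xs, hxsI⟩
  calc (1:ℝ) ≤ A * ((c/s)^m * m0) := hge1
  _ = |iteratedDeriv m (selfComp γ).1 xs| := hval.symm
  _ = |dmap m (toSm (selfComp γ)) ⟨xs, hxsI⟩| := by rw [h2]
  _ ≤ Qn m (selfComp γ) := h1
  _ ≤ Psn (selfComp γ) := Qn_le_Psn m _

end Aux5

/-- There is a zero-neighbourhood `V` of `C_c^∞(ℝ)` such that for all sequences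
`k : ℤ → ℕ` and `e : ℤ → ℝ⁺`, the image of the basic neighbourhood `V(k, e)`
under `γ ↦ γ∘γ − γ(0)` is not contained in `V`. -/
theorem exists_nhd_image_of_basic_not_subset :
    ∃ V ∈ nhds (0 : TestFn ℝ), ∀ (k : ℤ → ℕ) (e : ℤ → ℝ), (∀ n, 0 < e n) →
      ¬ (selfComp '' Vset k e ⊆ V) := by
  refine ⟨{γ : TestFn ℝ | Psn γ < 1}, ball_mem_nhds_testFn, ?_⟩
  intro k e he hsub
  obtain ⟨γ, hγV, hγP⟩ := key_construction k e he
  have hmem := hsub ⟨γ, hγV, rfl⟩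
  simp only [Set.mem_setOf_eq] at hmem
  linarith
end

section
/- The pointwise multiplication map μ : C^∞(ℝ, 𝕂) × C_c^∞(ℝ, 𝕂) → C_c^∞(ℝ, 𝕂), μ(γ, η) = γ·η, is discontinuous (jointly) at (0, 0) for the product of the compact-open C^∞ topology and the locally convex inductive limit topology. -/
open Filter Topology Set

variable {E F : Type*} [NormedAddCommGroup E] [NormedSpace ℝ E]
  [NormedAddCommGroup F] [NormedSpace ℝ F]

universe u

section Aux

variable {𝕂 : Type} [RCLike 𝕂]

/-- The `k`-th embedding used in the definition of the `SmoothFn` topology. -/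
noncomputable def SmoothFn.emb (k : ℕ) (f : SmoothFn ℝ 𝕂) :
    C(ℝ, ContinuousMultilinearMap ℝ (fun _ : Fin k => ℝ) 𝕂) :=
  ContinuousMap.mk (iteratedFDeriv ℝ k f.1)
    (f.2.continuous_iteratedFDeriv (mod_cast le_top))

theorem SmoothFn.nhds_zero_eq :
    𝓝 (0 : SmoothFn ℝ 𝕂) =
      ⨅ k : ℕ, Filter.comap (SmoothFn.emb k) (𝓝 (SmoothFn.emb k (0 : SmoothFn ℝ 𝕂))) := by
  rw [show (𝓝 (0 : SmoothFn ℝ 𝕂)) = @nhds _ (⨅ k : ℕ, TopologicalSpace.induced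
      (SmoothFn.emb (𝕂 := 𝕂) k) ContinuousMap.compactOpen) 0 from rfl, _root_.nhds_iInf]
  exact iInf_congr fun k => nhds_induced _ _

/-- Every neighbourhood of `0` in `C^∞(ℝ, 𝕂)` only restricts behaviour on some compact set. -/
theorem exists_compact_forall_mem {U : Set (SmoothFn ℝ 𝕂)} (hU : U ∈ 𝓝 (0 : SmoothFn ℝ 𝕂)) :
    ∃ K : Set ℝ, IsCompact K ∧ ∀ f : SmoothFn ℝ 𝕂, tsupport f.1 ∩ K = ∅ → f ∈ U := by
  by_contra hcon
  push_neg at hcon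
  choose g hg1 hg2 using fun K : {K : Set ℝ // IsCompact K} => hcon K.1 K.2
  haveI : Nonempty {K : Set ℝ // IsCompact K} := ⟨⟨∅, isCompact_empty⟩⟩
  haveI : IsDirected {K : Set ℝ // IsCompact K} (· ≤ ·) :=
    ⟨fun K L => ⟨⟨K.1 ∪ L.1, K.2.union L.2⟩, subset_union_left, subset_union_right⟩⟩
  have htend : Tendsto g atTop (𝓝 (0 : SmoothFn ℝ 𝕂)) := by
    rw [SmoothFn.nhds_zero_eq, Filter.tendsto_iInf]
    intro k
    rw [Filter.tendsto_comap_iff]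
    refine ContinuousMap.tendsto_iff_forall_isCompact_tendstoUniformlyOn.2 fun Q hQ => ?_
    refine Metric.tendstoUniformlyOn_iff.2 fun ε hε => ?_
    filter_upwards [Filter.Ici_mem_atTop (⟨Q, hQ⟩ : {K : Set ℝ // IsCompact K})] with K hK x hx
    have h1 : SmoothFn.emb (𝕂 := 𝕂) k 0 x = 0 := by
      show iteratedFDeriv ℝ k (fun _ : ℝ => (0 : 𝕂)) x = 0
      rw [iteratedFDeriv_zero_fun]; rfl
    have h2 : SmoothFn.emb k (g K) x = 0 := by
      show iteratedFDeriv ℝ k (g K).1 x = 0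
      by_contra hne
      have hmem : x ∈ tsupport (g K).1 :=
        support_iteratedFDeriv_subset k (Function.mem_support.2 hne)
      have : x ∈ tsupport (g K).1 ∩ K.1 := ⟨hmem, hK hx⟩
      rw [hg1 K] at this
      exact this
    show dist _ _ < ε
    simp only [Function.comp_apply]
    rw [h1, h2, dist_self]
    exact hε
  have hpre : g ⁻¹' U ∈ Filter.atTop := htend hU
  obtain ⟨K, hK⟩ := Filter.nonempty_of_mem hpre
  exact hg2 K hK

/-- Inclusion of test functions into bounded continuous functions. -/
noncomputable def TestFn.toBCF (f : TestFn 𝕂) : BoundedContinuousFunction ℝ 𝕂 :=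
  BoundedContinuousFunction.ofNormedAddCommGroup f.1 f.2.1.continuous
    (Classical.choose (f.2.2.exists_bound_of_continuous f.2.1.continuous))
    (Classical.choose_spec (f.2.2.exists_bound_of_continuous f.2.1.continuous))

@[simp] theorem TestFn.toBCF_apply (f : TestFn 𝕂) (x : ℝ) : f.toBCF x = f.1 x := rfl

/-- The sup-norm topology on test functions, induced from bounded continuous functions. -/
noncomputable def TestFn.bcfTopology : TopologicalSpace (TestFn 𝕂) :=
  TopologicalSpace.induced (TestFn.toBCF (𝕂 := 𝕂)) inferInstance

/-- `toBCF` as a linear map. -/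
noncomputable def TestFn.toBCFₗ : TestFn 𝕂 →ₗ[ℝ] BoundedContinuousFunction ℝ 𝕂 where
  toFun := TestFn.toBCF
  map_add' _ _ := by ext x; rfl
  map_smul' _ _ := by ext x; rfl

end Aux

/-- Pointwise multiplication `μ : C^∞(ℝ, 𝕂) × C_c^∞(ℝ, 𝕂) → C_c^∞(ℝ, 𝕂)` is
jointly discontinuous at `(0, 0)`. -/
theorem mul_jointly_discontinuous (𝕂 : Type) [RCLike 𝕂] :
    ¬ ContinuousAt (fun p : SmoothFn ℝ 𝕂 × TestFn 𝕂 =>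
      (⟨fun x => p.1.1 x * p.2.1 x, p.1.2.mul p.2.2.1, p.2.2.2.mul_left⟩ : TestFn 𝕂))
      (0, 0) := by
  intro hcont
  classical
  set 𝒮 : Set (TopologicalSpace (TestFn 𝕂)) := {t : TopologicalSpace (TestFn 𝕂) |
    @IsTopologicalAddGroup (TestFn 𝕂) t _ ∧ @ContinuousSMul ℝ (TestFn 𝕂) _ _ t ∧
    @LocallyConvexSpace ℝ (TestFn 𝕂) _ _ _ _ t ∧
    ∀ N : ℕ, Continuous[StepFn.topology N, t] (StepFn.toTestFn (F := 𝕂) (N := N))} with h𝒮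
  -- `TestFn.bcfTopology` belongs to the defining family of the inductive limit topology
  have hstep : ∀ N : ℕ, Continuous[StepFn.topology N, TestFn.bcfTopology]
      (StepFn.toTestFn (F := 𝕂) (N := N)) := by
    intro N
    rw [TestFn.bcfTopology, continuous_induced_rng]
    rw [continuous_iff_continuousAt]
    intro g
    rw [ContinuousAt, Metric.tendsto_nhds]
    intro ε hε
    have hcomp : Continuous[StepFn.topology N, ContinuousMap.compactOpen]
        (fun f : StepFn 𝕂 N => SmoothFn.emb (𝕂 := 𝕂) 0 f.toSmoothFn) := by
      have h1 : Continuous[SmoothFn.topology, ContinuousMap.compactOpen]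
          (SmoothFn.emb (𝕂 := 𝕂) 0) :=
        continuous_iInf_dom (i := 0) continuous_induced_dom
      have h2 : Continuous[StepFn.topology N, SmoothFn.topology]
          (StepFn.toSmoothFn (N := N) (F := 𝕂)) := continuous_induced_dom
      exact h1.comp h2
    have hid : Tendsto (fun c : C(ℝ, ContinuousMultilinearMap ℝ (fun _ : Fin 0 => ℝ) 𝕂) => c)
        (𝓝 (SmoothFn.emb (𝕂 := 𝕂) 0 g.toSmoothFn)) (𝓝 (SmoothFn.emb 0 g.toSmoothFn)) :=
      tendsto_id
    have hQ := ContinuousMap.tendsto_iff_forall_isCompact_tendstoUniformlyOn.1 hid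
      (Set.Icc (-(N : ℝ)) N) isCompact_Icc
    have hQ' := Metric.tendstoUniformlyOn_iff.1 hQ (ε / 2) (half_pos hε)
    filter_upwards [(hcomp.tendsto g).eventually hQ'] with f hf
    have hkey : ∀ h : StepFn 𝕂 N, ∀ x : ℝ,
        (continuousMultilinearCurryFin0 ℝ ℝ 𝕂) (SmoothFn.emb (𝕂 := 𝕂) 0 h.toSmoothFn x)
          = h.1 x := by
      intro h x
      show (continuousMultilinearCurryFin0 ℝ ℝ 𝕂) (iteratedFDeriv ℝ 0 h.1 x) = h.1 x
      simp [continuousMultilinearCurryFin0_apply, iteratedFDeriv_zero_apply]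
    have hdb : dist (TestFn.toBCF (StepFn.toTestFn f)) (TestFn.toBCF (StepFn.toTestFn g))
        ≤ ε / 2 := by
      rw [BoundedContinuousFunction.dist_le (le_of_lt (half_pos hε))]
      intro x
      by_cases hx : x ∈ Set.Icc (-(N : ℝ)) N
      · have h1 := hf x hx
        have h2 : dist (f.1 x) (g.1 x)
            = dist (SmoothFn.emb (𝕂 := 𝕂) 0 f.toSmoothFn x) (SmoothFn.emb 0 g.toSmoothFn x) := by
          rw [← (continuousMultilinearCurryFin0 ℝ ℝ 𝕂).dist_map, hkey, hkey]
        show dist (f.1 x) (g.1 x) ≤ ε / 2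
        rw [h2, dist_comm]
        exact le_of_lt h1
      · have hf0 : f.1 x = 0 := image_eq_zero_of_notMem_tsupport (fun hm => hx (f.2.2 hm))
        have hg0 : g.1 x = 0 := image_eq_zero_of_notMem_tsupport (fun hm => hx (g.2.2 hm))
        show dist (f.1 x) (g.1 x) ≤ ε / 2
        rw [hf0, hg0, dist_self]
        exact le_of_lt (half_pos hε)
    exact lt_of_le_of_lt hdb (half_lt_self hε)
  have htB : TestFn.bcfTopology ∈ 𝒮 := by
    refine ⟨?_, ?_, ?_, hstep⟩
    · exact topologicalAddGroup_induced (TestFn.toBCFₗ (𝕂 := 𝕂)).toAddMonoidHom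
    · exact continuousSMul_induced (TestFn.toBCFₗ (𝕂 := 𝕂))
    · exact LocallyConvexSpace.induced (TestFn.toBCFₗ (𝕂 := 𝕂))
  have hle : (TestFn.topology : TopologicalSpace (TestFn 𝕂)) ≤ TestFn.bcfTopology :=
    sInf_le htB
  set W : Set (TestFn 𝕂) := TestFn.toBCF ⁻¹' Metric.ball 0 1 with hWdef
  have hW : W ∈ 𝓝 (0 : TestFn 𝕂) := by
    have h0 : TestFn.toBCF (0 : TestFn 𝕂) = 0 := by ext x; rfl
    have hmem : W ∈ @nhds _ (TestFn.bcfTopology) (0 : TestFn 𝕂) := by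
      rw [TestFn.bcfTopology, nhds_induced]
      exact Filter.preimage_mem_comap (by rw [h0]; exact Metric.ball_mem_nhds _ one_pos)
    exact _root_.nhds_mono hle hmem
  set μ : SmoothFn ℝ 𝕂 × TestFn 𝕂 → TestFn 𝕂 := fun p =>
    (⟨fun x => p.1.1 x * p.2.1 x, p.1.2.mul p.2.2.1, p.2.2.2.mul_left⟩ : TestFn 𝕂) with hμdef
  have h00 : μ (0, 0) = (0 : TestFn 𝕂) := Subtype.ext (funext fun x => mul_zero _)
  have hpre : μ ⁻¹' W ∈ 𝓝 ((0, 0) : SmoothFn ℝ 𝕂 × TestFn 𝕂) :=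
    hcont (by rw [h00]; exact hW)
  rw [nhds_prod_eq] at hpre
  obtain ⟨U, hU, V, hV, hUV⟩ := Filter.mem_prod_iff.mp hpre
  obtain ⟨K, hK, hKU⟩ := exists_compact_forall_mem hU
  obtain ⟨a, haK⟩ := hK.isBounded.subset_closedBall 0
  set c : ℝ := max a 0 + 2 with hc
  set B : ContDiffBump c := ⟨1/2, 1, by norm_num, by norm_num⟩ with hB
  set φ : ℝ → 𝕂 := fun x => ((B x : ℝ) : 𝕂) with hφ
  have hφsm : ContDiff ℝ (⊤ : ℕ∞) φ := by
    have hφeq : φ = (RCLike.ofRealCLM (K := 𝕂)) ∘ (fun x => B x) := by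
      funext x; rfl
    rw [hφeq]
    exact (RCLike.ofRealCLM (K := 𝕂)).contDiff.comp B.contDiff
  have hsupp : tsupport φ = Metric.closedBall c 1 := by
    have h1 : Function.support φ = Function.support (fun x => B x) := by
      ext x; simp [hφ, Function.mem_support, RCLike.ofReal_eq_zero]
    have h2 : tsupport (fun x => B x) = Metric.closedBall c B.rOut := B.tsupport_eq
    rw [tsupport, h1, ← tsupport, h2]
  have hdisj : tsupport φ ∩ K = ∅ := by
    rw [hsupp]
    ext x
    simp only [Set.mem_inter_iff, Metric.mem_closedBall, Set.mem_empty_iff_false, iff_false,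
      not_and]
    intro hx1 hx2
    have h3 : |x - c| ≤ 1 := by simpa [Real.dist_eq] using hx1
    have h4 : |x - 0| ≤ a := by simpa [Real.dist_eq] using haK hx2
    have h5 : a ≤ max a 0 := le_max_left _ _
    rw [abs_le] at h3
    rw [abs_le] at h4
    simp only [hc] at h3
    linarith [h3.1, h4.2]
  have hφc : φ c = 1 := by
    have : B c = 1 := B.one_of_mem_closedBall (by
      simp [Metric.mem_closedBall, dist_self]
      exact B.rIn_pos.le
      )
    rw [hφ]; simp only [this, RCLike.ofReal_one]
  have hφcs : HasCompactSupport φ := by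
    rw [HasCompactSupport, hsupp]; exact isCompact_closedBall _ _
  set φS : SmoothFn ℝ 𝕂 := ⟨φ, hφsm⟩ with hφS
  set φT : TestFn 𝕂 := ⟨φ, hφsm, hφcs⟩ with hφT
  haveI hCS : @ContinuousSMul ℝ (TestFn 𝕂) _ _ TestFn.topology :=
    continuousSMul_sInf (fun t ht => ht.2.1)
  have hsmT : Tendsto (fun s : ℝ => s • φT) (𝓝 0) (𝓝 (0 : TestFn 𝕂)) := by
    have hco : Continuous (fun s : ℝ => s • φT) := continuous_id.smul continuous_const
    have := hco.tendsto 0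
    rwa [zero_smul] at this
  obtain ⟨δ, hδ, hball⟩ := Metric.mem_nhds_iff.mp (hsmT hV)
  set r : ℝ := δ / 2 with hr
  have hrpos : 0 < r := half_pos hδ
  have hrV : r • φT ∈ V := hball (by
    simp only [Metric.mem_ball, Real.dist_eq, sub_zero, abs_of_pos hrpos, hr]
    rw [abs_of_pos (half_pos hδ)]
    linarith)
  have hUmem : (r⁻¹ • φS : SmoothFn ℝ 𝕂) ∈ U := by
    refine hKU _ ?_
    have hsub : tsupport ((r⁻¹ • φS : SmoothFn ℝ 𝕂).1) ⊆ tsupport φ :=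
      closure_mono (Function.support_smul_subset_right _ _)
    exact Set.eq_empty_of_subset_empty (hdisj ▸ Set.inter_subset_inter_left K hsub)
  have hmemW : μ (r⁻¹ • φS, r • φT) ∈ W := hUV (Set.mk_mem_prod hUmem hrV)
  have hval : (μ (r⁻¹ • φS, r • φT)).1 c = 1 := by
    show (r⁻¹ • φ c) * (r • φ c) = 1
    rw [hφc, RCLike.real_smul_eq_coe_mul, RCLike.real_smul_eq_coe_mul, mul_one, mul_one,
      ← RCLike.ofReal_mul, inv_mul_cancel₀ hrpos.ne', RCLike.ofReal_one]
  have hlt : ‖(μ (r⁻¹ • φS, r • φT)).toBCF‖ < 1 := by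
    have := hmemW
    rw [hWdef, Set.mem_preimage, Metric.mem_ball, dist_zero_right] at this
    exact this
  have hle1 : ‖(1 : 𝕂)‖ ≤ ‖(μ (r⁻¹ • φS, r • φT)).toBCF‖ := by
    have h := BoundedContinuousFunction.norm_coe_le_norm ((μ (r⁻¹ • φS, r • φT)).toBCF) c
    calc ‖(1 : 𝕂)‖ = ‖((μ (r⁻¹ • φS, r • φT)).toBCF) c‖ := by
          rw [show ((μ (r⁻¹ • φS, r • φT)).toBCF) c
            = (μ (r⁻¹ • φS, r • φT)).1 c from rfl, hval]
      _ ≤ _ := h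
  rw [norm_one] at hle1
  linarith
end

section
/- Let E be a non-normable locally convex topological vector space over 𝕂. Then the evaluation (duality) pairing ev : E'_b × E → 𝕂, ev(λ, x) = λ(x), is discontinuous, where E'_b denotes the continuous dual equipped with the topology of uniform convergence on bounded sets. -/
open Bornology Set Filter Pointwise
open scoped ComplexOrder

section Aux
variable (𝕂 : Type*) [RCLike 𝕂] (E : Type*) [AddCommGroup E] [Module 𝕂 E]
    [Module ℝ E] [IsScalarTower ℝ 𝕂 E] [TopologicalSpace E]
    [IsTopologicalAddGroup E] [ContinuousSMul 𝕂 E] [LocallyConvexSpace ℝ E]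

theorem aux_bounded_closure_absConvexHull {S : Set E} (hS : IsVonNBounded 𝕂 S) :
    IsVonNBounded 𝕂 (closure (absConvexHull 𝕂 S)) := by
  intro W hW
  obtain ⟨W₁, ⟨hW₁, hW₁c⟩, hW₁W⟩ := (closed_nhds_basis (0 : E)).mem_iff.mp hW
  haveI : LocallyConvexSpace 𝕂 E := (locallyConvexSpace_iff_exists_convex_subset_zero 𝕂 E).mpr
    fun U hU => by
      obtain ⟨S', hS', hS'c, hS'U⟩ :=
        (locallyConvexSpace_iff_exists_convex_subset_zero ℝ E).mp inferInstance U hU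
      exact ⟨S', hS', convex_RCLike_iff_convex_real.mpr hS'c, hS'U⟩
  obtain ⟨W₂, ⟨hW₂n, hW₂a⟩, hW₂W₁⟩ := (nhds_hasBasis_absConvex 𝕂 E).mem_iff.mp hW₁
  filter_upwards [hS hW₂n, eventually_ne_cobounded (0 : 𝕂)] with a ha ha0
  have hconv : Convex ℝ (a • W₂) := by
    have : IsLinearMap ℝ (fun x : E => a • x) :=
      ⟨smul_add a, fun r x => smul_comm a r x⟩
    simpa [Set.image_smul] using (convex_RCLike_iff_convex_real.mp hW₂a.2).is_linear_image this
  have h1 : absConvexHull 𝕂 S ⊆ a • W₂ :=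
    absConvexHull_min ha ⟨hW₂a.1.smul a, convex_RCLike_iff_convex_real.mpr hconv⟩
  calc closure (absConvexHull 𝕂 S) ⊆ closure (a • W₂) := closure_mono h1
    _ = a • closure W₂ := closure_smul₀' ha0 _
    _ ⊆ a • W := by
        apply smul_set_mono
        exact (hW₁c.closure_subset_iff.mpr hW₂W₁).trans hW₁W

end Aux



/-- If a locally convex topological vector space `E` is not normable (it has no
bounded zero-neighbourhood), then the evaluation pairing `E'_b × E → 𝕂` on the
strong dual is discontinuous. -/
theorem eval_pairing_discontinuous_of_not_normable
    (𝕂 : Type*) [RCLike 𝕂] (E : Type*) [AddCommGroup E] [Module 𝕂 E]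
    [Module ℝ E] [IsScalarTower ℝ 𝕂 E] [TopologicalSpace E]
    [IsTopologicalAddGroup E] [ContinuousSMul 𝕂 E] [LocallyConvexSpace ℝ E]
    (hE : ¬ ∃ U ∈ nhds (0 : E), Bornology.IsVonNBounded 𝕂 U) :
    ¬ Continuous (fun p : (E →L[𝕂] 𝕂) × E => p.1 p.2) := by
  intro hcont
  apply hE
  haveI : ContinuousSMul ℝ E := IsScalarTower.continuousSMul 𝕂
  -- continuity at (0, 0)
  have h0 : Filter.Tendsto (fun p : (E →L[𝕂] 𝕂) × E => p.1 p.2)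
      (nhds ((0 : E →L[𝕂] 𝕂), (0 : E))) (nhds (0 : 𝕂)) := by
    simpa using hcont.tendsto ((0 : E →L[𝕂] 𝕂), (0 : E))
  rw [nhds_prod_eq] at h0
  have hmem := h0 (Metric.closedBall_mem_nhds (0 : 𝕂) one_pos)
  obtain ⟨V, hV, U, hU, hVU⟩ := Filter.mem_prod_iff.mp hmem
  have hVU' : ∀ f ∈ V, ∀ x ∈ U, ‖f x‖ ≤ 1 := by
    intro f hf x hx
    have := hVU (Set.mk_mem_prod hf hx)
    simpa [Metric.mem_closedBall, dist_zero_right] using this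
  -- basis for the strong topology
  obtain ⟨⟨S₀, T⟩, ⟨hS₀b, hT⟩, hsub⟩ :=
    (ContinuousLinearMap.hasBasis_nhds_zero (E := E) (F := 𝕂) (σ := RingHom.id 𝕂)).mem_iff.mp hV
  obtain ⟨ε, hε, hballT⟩ := Metric.mem_nhds_iff.mp hT
  set S : Set E := insert 0 S₀ with hSdef
  have hSb : IsVonNBounded 𝕂 S := hS₀b.insert 0
  set C : Set E := closure (absConvexHull 𝕂 S) with hCdef
  have hCclosed : IsClosed C := isClosed_closure
  have hCabs : AbsConvex 𝕂 C := absConvex_absConvexHull.closure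
  have hSC : S ⊆ C := (subset_absConvexHull (𝕜 := 𝕂)).trans subset_closure
  have h0C : (0 : E) ∈ C := hSC (mem_insert 0 S₀)
  set c : 𝕂 := ((ε / 2 : ℝ) : 𝕂) with hcdef
  have hc0 : c ≠ 0 := by
    simp [hcdef, RCLike.ofReal_eq_zero]
    positivity
  -- key claim
  have hkey : ∀ x ∈ U, c • x ∈ C := by
    intro x hx
    by_contra hxC
    obtain ⟨f, u, hfa, hfx⟩ :=
      RCLike.geometric_hahn_banach_closed_point (𝕜 := 𝕂) (convex_RCLike_iff_convex_real.mp hCabs.2) hCclosed hxC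
    have hu0 : 0 < u := by simpa using hfa 0 h0C
    have hnorm : ∀ a ∈ C, ‖f a‖ < u := by
      intro a ha
      rcases eq_or_ne (f a) 0 with h | h
      · simpa [h] using hu0
      · set c₀ : 𝕂 := (starRingEnd 𝕂) (f a) / ((‖f a‖ : ℝ) : 𝕂) with hc₀
        have hc₀n : ‖c₀‖ = 1 := by
          simp [hc₀, norm_div, RCLike.norm_conj, h]
        have hmem : c₀ • a ∈ C := hCabs.1 c₀ (le_of_eq hc₀n) (Set.smul_mem_smul_set ha)
        have hval : f (c₀ • a) = ((‖f a‖ : ℝ) : 𝕂) := by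
          rw [map_smul, smul_eq_mul, hc₀, div_mul_eq_mul_div, RCLike.conj_mul]
          rw [div_eq_iff (by simpa [RCLike.ofReal_eq_zero] using h)]
          norm_cast
          rw [sq]
        have := hfa _ hmem
        rw [hval] at this
        simpa using this
    -- rescale f to lie in V
    set g : E →L[𝕂] 𝕂 := ((ε / u : ℝ) : 𝕂) • f with hgdef
    have hgV : g ∈ V := by
      apply hsub
      intro s hs
      apply hballT
      have hfs : ‖f s‖ < u := hnorm s (hSC (mem_insert_of_mem 0 hs))
      have : ‖g s‖ < ε := by
        have hεu : (0 : ℝ) < ε / u := by positivity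
        calc ‖g s‖ = (ε / u) * ‖f s‖ := by
              simp [hgdef, norm_smul, RCLike.norm_ofReal, abs_div, abs_of_pos hε, abs_of_pos hu0]
          _ < (ε / u) * u := by exact (mul_lt_mul_iff_right₀ hεu).mpr hfs
          _ = ε := by field_simp
      simpa [Metric.mem_ball, dist_zero_right] using this
    have hgx : ‖g x‖ ≤ 1 := hVU' g hgV x hx
    have hfxnorm : ‖f x‖ ≤ u / ε := by
      have hεu : (0 : ℝ) < ε / u := by positivity
      have : (ε / u) * ‖f x‖ ≤ 1 := by
        calc (ε / u) * ‖f x‖ = ‖g x‖ := by simp [hgdef, norm_smul, RCLike.norm_ofReal, abs_div, abs_of_pos hε, abs_of_pos hu0]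
          _ ≤ 1 := hgx
      calc ‖f x‖ = (u / ε) * ((ε / u) * ‖f x‖) := by field_simp
        _ ≤ (u / ε) * 1 := by
            apply mul_le_mul_of_nonneg_left this (by positivity)
        _ = u / ε := mul_one _
    -- contradiction
    have hre : RCLike.re (f (c • x)) = (ε / 2) * RCLike.re (f x) := by
      rw [map_smul, hcdef, smul_eq_mul, RCLike.re_ofReal_mul]
    have : u < u / 2 := by
      calc u < RCLike.re (f (c • x)) := hfx
        _ = (ε / 2) * RCLike.re (f x) := hre
        _ ≤ (ε / 2) * ‖f x‖ := by
            apply mul_le_mul_of_nonneg_left (RCLike.re_le_norm _) (by positivity)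
        _ ≤ (ε / 2) * (u / ε) := by
            apply mul_le_mul_of_nonneg_left hfxnorm (by positivity)
        _ = u / 2 := by field_simp
    linarith
  -- U is bounded
  refine ⟨U, hU, ?_⟩
  have hCb : IsVonNBounded 𝕂 C := aux_bounded_closure_absConvexHull 𝕂 E hSb
  have himg : IsVonNBounded 𝕂 ((c⁻¹ • (1 : E →L[𝕂] E)) '' C) :=
    hCb.image (c⁻¹ • (1 : E →L[𝕂] E))
  apply himg.subset
  intro x hx
  exact ⟨c • x, hkey x hx, by simp [smul_smul, mul_inv_cancel₀ hc0, inv_mul_cancel₀ hc0]⟩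
end
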